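/- arXiv:1712.08887 — 8 statements merged into one kernel-verified Lean document; each statement's English description precedes it below -/
import Mathlib

section
/- With Ω = σ_ε^{-2} I + σ_η^{-2} Λ (where Λ is as in the AR(1) state space model, σ_ε, σ_η > 0, |φ| < 1), the rate of convergence of the EM algorithm for the unknown location μ under the partially noncentered parametrization with working parameter vector w is τ(w)^{-1} ρ(w)^T Ω^{-1} ρ(w), where ρ(w) = σ_ε^{-2} 1 - Ω(1-w) and τ(w) = σ_ε^{-2} w^T w + σ_η^{-2}(1-w)^T Λ (1-w); this rate is nonnegative and equals zero when w = w^opt := 1 - σ_ε^{-2} Ω^{-1} 1. -/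
open Matrix

/-- The AR(1) precision tridiagonal matrix. -/
noncomputable def ar1Lambda (n : ℕ) (φ : ℝ) : Matrix (Fin n) (Fin n) ℝ :=
  Matrix.of fun i j =>
    if i = j then (if i.val = 0 ∨ i.val = n - 1 then (1 : ℝ) else 1 + φ ^ 2)
    else if i.val + 1 = j.val ∨ j.val + 1 = i.val then -φ else 0

noncomputable def arB (n : ℕ) (φ : ℝ) : Matrix (Fin n) (Fin n) ℝ :=
  Matrix.of fun i j =>
    (if i = j then (if i.val = 0 then Real.sqrt (1 - φ ^ 2) else 1) else 0)
      - φ * (if j.val + 1 = i.val then 1 else 0)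

lemma sumA (n : ℕ) (f : Fin n → ℝ) (j k : Fin n) :
    ∑ i : Fin n, (if i = j then (1:ℝ) else 0) * (if i = k then (1:ℝ) else 0) * f i
      = if j = k then f j else 0 := by
  rw [Finset.sum_eq_single j (fun i _ hi => by simp [hi]) (by simp)]
  simp

lemma sumB (n : ℕ) (f : Fin n → ℝ) (j k : Fin n) :
    ∑ i : Fin n, (if i = j then (1:ℝ) else 0) * (if k.val + 1 = i.val then (1:ℝ) else 0) * f i
      = if k.val + 1 = j.val then f j else 0 := by
  rw [Finset.sum_eq_single j (fun i _ hi => by simp [hi]) (by simp)]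
  simp only [if_pos rfl, one_mul]
  split_ifs <;> simp

lemma sumC (n : ℕ) (j k : Fin n) :
    ∑ i : Fin n, (if j.val + 1 = i.val then (1:ℝ) else 0) * (if k.val + 1 = i.val then (1:ℝ) else 0)
      = if j = k ∧ j.val + 1 < n then 1 else 0 := by
  rcases Nat.lt_or_ge (j.val + 1) n with hj | hj
  · rw [Finset.sum_eq_single (⟨j.val + 1, hj⟩ : Fin n)
      (fun i _ hi => by
        have : ¬ (j.val + 1 = i.val) := fun h => hi (by simp [Fin.ext_iff, ← h])
        simp [this])
      (by simp)]
    simp only [Fin.ext_iff]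
    split_ifs <;> simp_all
  · rw [if_neg (by omega)]
    apply Finset.sum_eq_zero
    intro i _
    have : ¬ (j.val + 1 = i.val) := by omega
    simp [this]

lemma arB_factor (n : ℕ) (hn : 2 ≤ n) (φ : ℝ) (hφ : |φ| < 1) :
    ar1Lambda n φ = (arB n φ)ᵀ * arB n φ := by
  have h1 : (0:ℝ) ≤ 1 - φ ^ 2 := by nlinarith [abs_nonneg φ, sq_abs φ, abs_lt.1 hφ]
  have hs : Real.sqrt (1 - φ ^ 2) * Real.sqrt (1 - φ ^ 2) = 1 - φ ^ 2 :=
    Real.mul_self_sqrt h1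
  ext j k
  simp only [ar1Lambda, arB, Matrix.mul_apply, Matrix.transpose_apply, Matrix.of_apply]
  set d : Fin n → ℝ := fun i => if i.val = 0 then Real.sqrt (1 - φ ^ 2) else 1 with hd
  have expand : ∀ i : Fin n,
      ((if i = j then d i else 0) - φ * (if j.val + 1 = i.val then 1 else 0)) *
      ((if i = k then d i else 0) - φ * (if k.val + 1 = i.val then 1 else 0))
      = (if i = j then (1:ℝ) else 0) * (if i = k then (1:ℝ) else 0) * (d i * d i)
        - φ * ((if i = j then (1:ℝ) else 0) * (if k.val + 1 = i.val then (1:ℝ) else 0) * d i)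
        - φ * ((if i = k then (1:ℝ) else 0) * (if j.val + 1 = i.val then (1:ℝ) else 0) * d i)
        + φ ^ 2 * ((if j.val + 1 = i.val then (1:ℝ) else 0) * (if k.val + 1 = i.val then (1:ℝ) else 0)) := by
    intro i; split_ifs <;> ring
  have step : ∀ i : Fin n,
      ((if i = j then (if i.val = 0 then Real.sqrt (1 - φ ^ 2) else 1) else 0)
        - φ * (if j.val + 1 = i.val then 1 else 0)) *
      ((if i = k then (if i.val = 0 then Real.sqrt (1 - φ ^ 2) else 1) else 0)
        - φ * (if k.val + 1 = i.val then 1 else 0))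
      = ((if i = j then d i else 0) - φ * (if j.val + 1 = i.val then 1 else 0)) *
        ((if i = k then d i else 0) - φ * (if k.val + 1 = i.val then 1 else 0)) := by
    intro i; rfl
  rw [Finset.sum_congr rfl fun i _ => (step i).trans (expand i)]
  rw [Finset.sum_add_distrib, Finset.sum_sub_distrib, Finset.sum_sub_distrib,
    ← Finset.mul_sum, ← Finset.mul_sum, ← Finset.mul_sum,
    sumA n (fun i => d i * d i) j k, sumB n d j k, sumB n d k j, sumC n j k]
  simp only [hd]
  have hcast : ∀ p q : Fin n, p = q ↔ p.val = q.val := fun p q => Fin.ext_iff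
  simp only [hcast]
  split_ifs
  all_goals try ring
  all_goals try (exfalso; omega)
  all_goals (rw [Real.sq_sqrt h1]; ring)

lemma ar1_psd (n : ℕ) (hn : 2 ≤ n) (φ : ℝ) (hφ : |φ| < 1) (x : Fin n → ℝ) :
    0 ≤ x ⬝ᵥ (ar1Lambda n φ *ᵥ x) := by
  rw [arB_factor n hn φ hφ, ← Matrix.mulVec_mulVec, Matrix.dotProduct_mulVec,
    Matrix.vecMul_transpose]
  exact Finset.sum_nonneg fun i _ => mul_self_nonneg _

lemma ar1_herm (n : ℕ) (φ : ℝ) : (ar1Lambda n φ).IsHermitian := by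
  ext i j
  simp only [ar1Lambda, Matrix.conjTranspose_apply, Matrix.of_apply, star_trivial]
  rcases eq_or_ne i j with rfl | h
  · rfl
  · rw [if_neg (fun hh => h hh.symm), if_neg h]
    exact if_congr or_comm rfl rfl

/-- the EM rate of convergence for the location parameter under the
partially noncentered parametrization is `τ(w)⁻¹ ρ(w)ᵀ Ω⁻¹ ρ(w)`; this quantity is
nonnegative for every `w` and equals zero at `w = w^opt = 1 - σ_ε⁻² Ω⁻¹ 1`. -/
theorem stmt_1 (n : ℕ) (hn : 2 ≤ n) (φ : ℝ) (hφ : |φ| < 1)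
    (σε ση : ℝ) (hσε : 0 < σε) (hση : 0 < ση)
    (Λ : Matrix (Fin n) (Fin n) ℝ) (hΛ : Λ = ar1Lambda n φ)
    (Ω : Matrix (Fin n) (Fin n) ℝ)
    (hΩ : Ω = (σε ^ 2)⁻¹ • (1 : Matrix (Fin n) (Fin n) ℝ) + (ση ^ 2)⁻¹ • Λ)
    (ρ : (Fin n → ℝ) → (Fin n → ℝ))
    (hρ : ∀ w, ρ w = (σε ^ 2)⁻¹ • (1 : Fin n → ℝ) - Ω *ᵥ ((1 : Fin n → ℝ) - w))
    (τ : (Fin n → ℝ) → ℝ)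
    (hτ : ∀ w, τ w = (σε ^ 2)⁻¹ * (w ⬝ᵥ w)
        + (ση ^ 2)⁻¹ * (((1 : Fin n → ℝ) - w) ⬝ᵥ (Λ *ᵥ ((1 : Fin n → ℝ) - w))))
    (rate : (Fin n → ℝ) → ℝ)
    (hrate : ∀ w, rate w = (τ w)⁻¹ * (ρ w ⬝ᵥ (Ω⁻¹ *ᵥ ρ w)))
    (wopt : Fin n → ℝ)
    (hwopt : wopt = (1 : Fin n → ℝ) - (σε ^ 2)⁻¹ • (Ω⁻¹ *ᵥ (1 : Fin n → ℝ))) :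
    (∀ w, 0 ≤ rate w) ∧ rate wopt = 0 := by
  have dps : ∀ v : Fin n → ℝ, 0 ≤ v ⬝ᵥ v :=
    fun v => Finset.sum_nonneg fun i _ => mul_self_nonneg _
  have hε2 : (0:ℝ) < (σε ^ 2)⁻¹ := by positivity
  have hη2 : (0:ℝ) < (ση ^ 2)⁻¹ := by positivity
  -- Ω is positive definite
  have hΩpd : Ω.PosDef := by
    rw [Matrix.posDef_iff_dotProduct_mulVec]
    constructor
    · show Ωᴴ = Ω
      rw [hΩ, hΛ, Matrix.conjTranspose_add, Matrix.conjTranspose_smul,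
        Matrix.conjTranspose_smul, Matrix.conjTranspose_one, (ar1_herm n φ).eq]
      simp
    · intro x hx
      have hq : star x ⬝ᵥ (Ω *ᵥ x)
          = (σε ^ 2)⁻¹ * (x ⬝ᵥ x) + (ση ^ 2)⁻¹ * (x ⬝ᵥ (Λ *ᵥ x)) := by
        rw [star_trivial, hΩ, Matrix.add_mulVec, Matrix.smul_mulVec,
          Matrix.smul_mulVec, Matrix.one_mulVec, dotProduct_add,
          dotProduct_smul, dotProduct_smul, smul_eq_mul, smul_eq_mul]
      rw [hq]
      have h1 : 0 < x ⬝ᵥ x := by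
        rcases (dps x).lt_or_eq with h | h
        · exact h
        · exact absurd (dotProduct_self_eq_zero.mp h.symm) hx
      have h2 : 0 ≤ x ⬝ᵥ (Λ *ᵥ x) := hΛ ▸ ar1_psd n hn φ hφ x
      have := mul_pos hε2 h1
      have := mul_nonneg hη2.le h2
      positivity
  have hinv : Ω * Ω⁻¹ = 1 := Matrix.mul_nonsing_inv Ω hΩpd.det_pos.ne'.isUnit
  have hinvpsd : (Ω⁻¹).PosSemidef := hΩpd.posSemidef.inv
  have hquad : ∀ v : Fin n → ℝ, 0 ≤ v ⬝ᵥ (Ω⁻¹ *ᵥ v) := by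
    intro v
    have := hinvpsd.dotProduct_mulVec_nonneg v
    rwa [star_trivial] at this
  have hτnn : ∀ w, 0 ≤ τ w := by
    intro w
    rw [hτ w]
    have h1 : 0 ≤ w ⬝ᵥ w := dps w
    have h2 : 0 ≤ ((1 : Fin n → ℝ) - w) ⬝ᵥ (Λ *ᵥ ((1 : Fin n → ℝ) - w)) :=
      hΛ ▸ ar1_psd n hn φ hφ _
    have := mul_nonneg hε2.le h1
    have := mul_nonneg hη2.le h2
    linarith
  constructor
  · intro w
    rw [hrate w]
    exact mul_nonneg (inv_nonneg.2 (hτnn w)) (hquad _)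
  · have hρ0 : ρ wopt = 0 := by
      rw [hρ, hwopt, sub_sub_cancel, Matrix.mulVec_smul, Matrix.mulVec_mulVec, hinv,
        Matrix.one_mulVec, sub_self]
    rw [hrate, hρ0, zero_dotProduct, mul_zero]
end

section
/- Let Q be the n×n symmetric tridiagonal matrix with diagonal (c₁, c, ..., c, c₁) and off-diagonals -b (b = ±1, c₁ = (1+γ)/|φ|, c = c₁+|φ|, 0<|φ|<1, γ>0). Define r_± = (c ± √(c²-4))/2, v_± = r_± - |φ|, κ₀ = r₊ - r₋, κ_t = v₊ r₊^t - v₋ r₋^t for t = 0,...,n-1, and κ = v₊² r₊^{n-1} - v₋² r₋^{n-1}. Then the inverse of Q satisfies (Q^{-1})_{tj} = u_t v_j for t ≤ j, where v_t = b^{t-1} κ_{n-t}/κ and u_t = b^{t-1} κ_{t-1}/κ₀. -/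
open Matrix

/-- The tridiagonal matrix `Q` with diagonal `(c₁, c, …, c, c₁)` and
off-diagonal entries `-b`. -/
noncomputable def triQ (n : ℕ) (c₁ c b : ℝ) : Matrix (Fin n) (Fin n) ℝ :=
  Matrix.of fun i j =>
    if i = j then (if i.val = 0 ∨ i.val = n - 1 then c₁ else c)
    else if i.val + 1 = j.val ∨ j.val + 1 = i.val then -b else 0

lemma tri_mul_apply {n : ℕ} (c₁ c b : ℝ) (M : Matrix (Fin n) (Fin n) ℝ) (i j : Fin n) :
    (triQ n c₁ c b * M) i j =
      (if i.val = 0 ∨ i.val = n - 1 then c₁ else c) * M i j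
      - b * (if h : i.val + 1 < n then M ⟨i.val + 1, h⟩ j else 0)
      - b * (if h : 0 < i.val then
          M ⟨i.val - 1, Nat.lt_of_le_of_lt (Nat.sub_le _ _) i.isLt⟩ j else 0) := by
  rw [Matrix.mul_apply]
  have step : ∀ k : Fin n, triQ n c₁ c b i k * M k j =
      (if i = k then (if i.val = 0 ∨ i.val = n - 1 then c₁ else c) * M k j else 0)
      + (if i.val + 1 = k.val then -b * M k j else 0)
      + (if k.val + 1 = i.val then -b * M k j else 0) := by
    intro k
    simp only [triQ, Matrix.of_apply]
    by_cases h1 : i = k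
    · subst h1
      simp only [if_pos (rfl : i = i), if_neg (show ¬(i.val + 1 = i.val) by omega),
        add_zero, if_true]
    · rw [if_neg h1, if_neg h1]
      by_cases h2 : i.val + 1 = k.val
      · rw [if_pos (Or.inl h2), if_pos h2, if_neg (by omega)]; ring
      · by_cases h3 : k.val + 1 = i.val
        · rw [if_pos (Or.inr h3), if_neg h2, if_pos h3]; ring
        · rw [if_neg (by tauto), if_neg h2, if_neg h3]; ring
  rw [Finset.sum_congr rfl (fun k _ => step k), Finset.sum_add_distrib,
    Finset.sum_add_distrib]
  have S1 : (∑ k : Fin n, if i = k then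
      (if i.val = 0 ∨ i.val = n - 1 then c₁ else c) * M k j else 0)
      = (if i.val = 0 ∨ i.val = n - 1 then c₁ else c) * M i j := by
    rw [Finset.sum_ite_eq]; simp
  have S2 : (∑ k : Fin n, if i.val + 1 = k.val then -b * M k j else 0)
      = -b * (if h : i.val + 1 < n then M ⟨i.val + 1, h⟩ j else 0) := by
    by_cases h : i.val + 1 < n
    · rw [dif_pos h]
      have hc : ∀ k : Fin n, (i.val + 1 = k.val) ↔ ((⟨i.val + 1, h⟩ : Fin n) = k) := by
        intro k; rw [Fin.ext_iff]
      rw [Finset.sum_congr rfl (fun k _ => by rw [if_congr (hc k) rfl rfl]),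
        Finset.sum_ite_eq]
      simp
    · rw [dif_neg h, Finset.sum_eq_zero]
      · ring
      · intro k _
        rw [if_neg (by omega)]
  have S3 : (∑ k : Fin n, if k.val + 1 = i.val then -b * M k j else 0)
      = -b * (if h : 0 < i.val then
          M ⟨i.val - 1, Nat.lt_of_le_of_lt (Nat.sub_le _ _) i.isLt⟩ j else 0) := by
    by_cases h : 0 < i.val
    · rw [dif_pos h]
      have hc : ∀ k : Fin n, (k.val + 1 = i.val) ↔
          ((⟨i.val - 1, Nat.lt_of_le_of_lt (Nat.sub_le _ _) i.isLt⟩ : Fin n) = k) := by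
        intro k; rw [Fin.ext_iff]; simp; omega
      rw [Finset.sum_congr rfl (fun k _ => by rw [if_congr (hc k) rfl rfl]),
        Finset.sum_ite_eq]
      simp
    · rw [dif_neg h, Finset.sum_eq_zero]
      · ring
      · intro k _
        rw [if_neg (by omega)]
  rw [S1, S2, S3]; ring

noncomputable def auxM (n : ℕ) (b κ₀ κ : ℝ) (κf : ℕ → ℝ) : Matrix (Fin n) (Fin n) ℝ :=
  Matrix.of fun i j =>
    (b ^ (min i.val j.val) * κf (min i.val j.val) / κ₀) *
      (b ^ (max i.val j.val) * κf (n - 1 - max i.val j.val) / κ)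

lemma aux_mul (n : ℕ) (hn : 2 ≤ n) (c₁ c b κ₀ κ : ℝ) (κf : ℕ → ℝ)
    (hb : b ^ 2 = 1) (hκ₀ : κ₀ ≠ 0) (hκ : κ ≠ 0)
    (hκ0 : κf 0 = κ₀)
    (hrec : ∀ t, κf (t + 2) = c * κf (t + 1) - κf t)
    (hrow : c₁ * κf 0 = κf 1)
    (hcorner : c₁ * κf (n - 1) - κf (n - 2) = κ)
    (hcross : ∀ a d : ℕ, a + d + 2 = n → κf (a + 1) * κf (d + 1) - κf a * κf d = κ₀ * κ) :
    triQ n c₁ c b * auxM n b κ₀ κ κf = 1 := by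
  obtain ⟨m, rfl⟩ : ∃ m, n = m + 2 := ⟨n - 2, by omega⟩
  have hbp : ∀ k : ℕ, b ^ (k + 2) = b ^ k := by
    intro k; rw [pow_add, hb, mul_one]
  have hbk : ∀ k : ℕ, b ^ k * b ^ k = 1 := by
    intro k
    rw [← pow_add, show k + k = 2 * k from by omega, pow_mul, hb, one_pow]
  have hκ₀i : κ₀ * κ₀⁻¹ = 1 := mul_inv_cancel₀ hκ₀
  have hκi : κ * κ⁻¹ = 1 := mul_inv_cancel₀ hκ
  ext i j
  rw [tri_mul_apply, Matrix.one_apply]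
  obtain ⟨p, hp⟩ := i
  obtain ⟨q, hq⟩ := j
  simp only [auxM, Matrix.of_apply, Fin.mk.injEq]
  rcases lt_trichotomy p q with hpq | rfl | hpq
  · -- p < q : off-diagonal above, result 0
    rw [if_neg (by omega : ¬ (p = q)), dif_pos (by omega : p + 1 < m + 2)]
    rcases Nat.eq_zero_or_pos p with rfl | hppos
    · -- first row
      rw [if_pos (by omega : (0:ℕ) = 0 ∨ (0:ℕ) = m + 2 - 1), dif_neg (by omega)]
      simp only [show min 0 q = 0 from by omega, show max 0 q = q from by omega,
        show min (0 + 1) q = 1 from by omega, show max (0 + 1) q = q from by omega]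
      linear_combination ((b ^ q * κf (m + 2 - 1 - q) / κ) / κ₀) * hrow
        - ((b ^ q * κf (m + 2 - 1 - q) / κ) * κf 1 / κ₀) * hb
    · -- interior row, p < q
      obtain ⟨p', rfl⟩ : ∃ p', p = p' + 1 := ⟨p - 1, by omega⟩
      rw [if_neg (by omega : ¬ (p' + 1 = 0 ∨ p' + 1 = m + 2 - 1)), dif_pos hppos]
      simp only [show min (p' + 1) q = p' + 1 from by omega,
        show max (p' + 1) q = q from by omega,
        show min (p' + 1 + 1) q = p' + 2 from by omega,
        show max (p' + 1 + 1) q = q from by omega,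
        show p' + 1 - 1 = p' from by omega,
        show min p' q = p' from by omega, show max p' q = q from by omega]
      rw [hrec p', hbp p']
      ring
  · -- diagonal
    rw [if_pos rfl]
    rcases Nat.eq_zero_or_pos p with rfl | hppos
    · -- corner (0,0)
      rw [if_pos (by omega : (0:ℕ) = 0 ∨ (0:ℕ) = m + 2 - 1),
        dif_pos (by omega : 0 + 1 < m + 2), dif_neg (by omega)]
      simp only [show min 0 0 = 0 from by omega, show max 0 0 = 0 from by omega,
        show min (0 + 1) 0 = 0 from by omega, show max (0 + 1) 0 = 1 from by omega,
        show m + 2 - 1 - 0 = m + 1 from by omega, show m + 2 - 1 - 1 = m from by omega,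
        pow_zero]
      have hcor : c₁ * κf (m + 1) - κf m = κ := by
        have := hcorner
        rwa [show m + 2 - 1 = m + 1 from by omega, show m + 2 - 2 = m from by omega] at this
      field_simp
      linear_combination κf 0 * hcor - (κf 0 * κf m) * hb + κ * hκ0
    · by_cases hplast : p = m + 1
      · -- corner (n-1, n-1)
        subst hplast
        rw [if_pos (by omega : m + 1 = 0 ∨ m + 1 = m + 2 - 1),
          dif_neg (by omega), dif_pos (by omega : 0 < m + 1)]
        simp only [show min (m + 1) (m + 1) = m + 1 from by omega,
          show max (m + 1) (m + 1) = m + 1 from by omega,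
          show m + 1 - 1 = m from by omega,
          show min m (m + 1) = m from by omega, show max m (m + 1) = m + 1 from by omega,
          show m + 2 - 1 - (m + 1) = 0 from by omega]
        have hcor : c₁ * κf (m + 1) - κf m = κ := by
          have := hcorner
          rwa [show m + 2 - 1 = m + 1 from by omega, show m + 2 - 2 = m from by omega] at this
        field_simp
        linear_combination (κf 0 * (c₁ * κf (m + 1) - κf m)) * hbk (m + 1)
          + κf 0 * hcor + κ * hκ0
      · -- interior diagonal
        obtain ⟨p', rfl⟩ : ∃ p', p = p' + 1 := ⟨p - 1, by omega⟩
        have hple : p' + 1 ≤ m := by omega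
        obtain ⟨s, hs⟩ : ∃ s, m = p' + 1 + s := ⟨m - p' - 1, by omega⟩
        rw [if_neg (by omega : ¬ (p' + 1 = 0 ∨ p' + 1 = m + 2 - 1)),
          dif_pos (by omega : p' + 1 + 1 < m + 2), dif_pos (by omega : 0 < p' + 1)]
        simp only [show min (p' + 1) (p' + 1) = p' + 1 from by omega,
          show max (p' + 1) (p' + 1) = p' + 1 from by omega,
          show min (p' + 1 + 1) (p' + 1) = p' + 1 from by omega,
          show max (p' + 1 + 1) (p' + 1) = p' + 2 from by omega,
          show p' + 1 - 1 = p' from by omega,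
          show min p' (p' + 1) = p' from by omega,
          show max p' (p' + 1) = p' + 1 from by omega,
          show m + 2 - 1 - (p' + 1) = s + 1 from by omega,
          show m + 2 - 1 - (p' + 2) = s from by omega]
        have hx : κf (p' + 1) * κf (s + 1 + 1) - κf p' * κf (s + 1) = κ₀ * κ := by
          have := hcross p' (s + 1) (by omega)
          linarith [this]
        field_simp
        linear_combination (-(b ^ (p' + 1) * b ^ (p' + 1) * κf (p' + 1) * κf s)) * hb
          + (b ^ (p' + 1) * b ^ (p' + 1)) * hx
          - (b ^ (p' + 1) * b ^ (p' + 1) * κf (p' + 1)) * hrec s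
          + (κ₀ * κ) * hbk (p' + 1)
  · -- p > q : off-diagonal below, result 0
    rw [if_neg (by omega : ¬ (p = q)), dif_pos (by omega : 0 < p)]
    by_cases hplast : p = m + 1
    · subst hplast
      rw [if_pos (by omega : m + 1 = 0 ∨ m + 1 = m + 2 - 1), dif_neg (by omega)]
      simp only [show min (m + 1) q = q from by omega,
        show max (m + 1) q = m + 1 from by omega,
        show m + 1 - 1 = m from by omega,
        show min m q = q from by omega, show max m q = m from by omega,
        show m + 2 - 1 - (m + 1) = 0 from by omega,
        show m + 2 - 1 - m = 1 from by omega]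
      linear_combination ((b ^ q * κf q / κ₀) * b ^ (m + 1) / κ) * hrow
    · obtain ⟨p', rfl⟩ : ∃ p', p = p' + 1 := ⟨p - 1, by omega⟩
      obtain ⟨s, hs⟩ : ∃ s, m = p' + 1 + s := ⟨m - p' - 1, by omega⟩
      rw [if_neg (by omega : ¬ (p' + 1 = 0 ∨ p' + 1 = m + 2 - 1)),
        dif_pos (by omega : p' + 1 + 1 < m + 2)]
      simp only [show min (p' + 1) q = q from by omega,
        show max (p' + 1) q = p' + 1 from by omega,
        show min (p' + 1 + 1) q = q from by omega,
        show max (p' + 1 + 1) q = p' + 2 from by omega,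
        show p' + 1 - 1 = p' from by omega,
        show min p' q = q from by omega, show max p' q = p' from by omega,
        show m + 2 - 1 - (p' + 1) = s + 1 from by omega,
        show m + 2 - 1 - (p' + 2) = s from by omega,
        show m + 2 - 1 - p' = s + 2 from by omega]
      rw [hrec s, hbp p']
      ring

set_option maxHeartbeats 1000000 in
/-- explicit formula for the inverse of `Q`:
`(Q⁻¹)_{tj} = u_t v_j` for `t ≤ j` (here stated in 0-based indexing, so
`u_t = b^t κ_t / κ₀` and `v_t = b^t κ_{n-1-t} / κ`). -/
theorem stmt_5 (n : ℕ) (hn : 2 ≤ n) (φ γ : ℝ) (hφ0 : φ ≠ 0) (hφ : |φ| < 1) (hγ : 0 < γ)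
    (b c₁ c : ℝ) (hb : b = φ / |φ|) (hc₁ : c₁ = (1 + γ) / |φ|) (hc : c = c₁ + |φ|)
    (rp rm : ℝ) (hrp : rp = (c + Real.sqrt (c ^ 2 - 4)) / 2)
    (hrm : rm = (c - Real.sqrt (c ^ 2 - 4)) / 2)
    (vp vm : ℝ) (hvp : vp = rp - |φ|) (hvm : vm = rm - |φ|)
    (κ₀ : ℝ) (hκ₀ : κ₀ = rp - rm)
    (κf : ℕ → ℝ) (hκf : ∀ t, κf t = vp * rp ^ t - vm * rm ^ t)
    (κ : ℝ) (hκ : κ = vp ^ 2 * rp ^ (n - 1) - vm ^ 2 * rm ^ (n - 1))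
    (u v : Fin n → ℝ)
    (hu : ∀ t : Fin n, u t = b ^ t.val * κf t.val / κ₀)
    (hv : ∀ t : Fin n, v t = b ^ t.val * κf (n - 1 - t.val) / κ) :
    ∀ t j : Fin n, t ≤ j → (triQ n c₁ c b)⁻¹ t j = u t * v j := by
  obtain ⟨m, rfl⟩ : ∃ m, n = m + 2 := ⟨n - 2, by omega⟩
  have habs : 0 < |φ| := abs_pos.mpr hφ0
  have habs2 : |φ| ^ 2 = φ ^ 2 := sq_abs φ
  have hφ2 : φ ^ 2 < 1 := by nlinarith
  have hb2 : b ^ 2 = 1 := by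
    rw [hb, div_pow, sq_abs]
    field_simp
  have hcsub : c - 2 = ((1 - |φ|) ^ 2 + γ) / |φ| := by
    rw [hc, hc₁]
    field_simp
    ring
  have hc2 : 2 < c := by
    have : 0 < ((1 - |φ|) ^ 2 + γ) / |φ| := by positivity
    linarith
  have hs2 : (Real.sqrt (c ^ 2 - 4)) ^ 2 = c ^ 2 - 4 := Real.sq_sqrt (by nlinarith)
  have hs_pos : 0 < Real.sqrt (c ^ 2 - 4) := Real.sqrt_pos.mpr (by nlinarith)
  have hslt : Real.sqrt (c ^ 2 - 4) < c := by nlinarith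
  have hsum : rp + rm = c := by rw [hrp, hrm]; ring
  have hprod : rp * rm = 1 := by
    rw [hrp, hrm]
    linear_combination (-(1:ℝ)/4) * hs2
  have hκ₀pos : 0 < κ₀ := by rw [hκ₀, hrp, hrm]; linarith
  have hrp2 : rp ^ 2 = c * rp - 1 := by linear_combination rp * hsum - hprod
  have hrm2 : rm ^ 2 = c * rm - 1 := by linear_combination rm * hsum - hprod
  have hc₁' : c₁ = c - |φ| := by linarith
  have hcφ : c * |φ| = 1 + γ + φ ^ 2 := by
    rw [hc, hc₁]
    field_simp
    linear_combination habs2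
  have hvpvm : vp * vm = -γ := by
    rw [hvp, hvm]
    linear_combination hprod - |φ| * hsum - hcφ + habs2
  have hrm_pos : 0 < rm := by rw [hrm]; linarith
  have hrp_gt1 : 1 < rp := by rw [hrp]; linarith
  have hrm_lt1 : rm < 1 := by nlinarith
  have hvd : vp - vm = κ₀ := by rw [hvp, hvm, hκ₀]; ring
  have hvp_pos : 0 < vp := by
    by_contra h
    push_neg at h
    have hvm' : vm < 0 := by linarith
    nlinarith [mul_nonneg (neg_nonneg.2 h) (neg_pos.2 hvm').le]
  have hvm_neg : vm < 0 := by nlinarith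
  have hvsum : 0 < vp + vm := by
    have h1 : (vp + vm) * |φ| = 1 + γ - φ ^ 2 := by
      rw [hvp, hvm]
      linear_combination |φ| * hsum + hcφ - 2 * habs2
    nlinarith
  have hκpos : 0 < κ := by
    rw [hκ, show m + 2 - 1 = m + 1 from by omega]
    have h1 : rm ^ (m + 1) ≤ 1 := by
      calc rm ^ (m + 1) ≤ 1 ^ (m + 1) := pow_le_pow_left₀ hrm_pos.le hrm_lt1.le _
        _ = 1 := one_pow _
    have h2 : (1:ℝ) ≤ rp ^ (m + 1) := by
      calc (1:ℝ) = 1 ^ (m + 1) := (one_pow _).symm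
        _ ≤ rp ^ (m + 1) := pow_le_pow_left₀ (by norm_num) hrp_gt1.le _
    have hvm2 : vm ^ 2 < vp ^ 2 := by
      have key : 0 < (vp + vm) * (vp - vm) := mul_pos hvsum (by linarith)
      linarith [key, (show (vp + vm) * (vp - vm) = vp ^ 2 - vm ^ 2 by ring)]
    have h3 : vm ^ 2 * rm ^ (m + 1) ≤ vm ^ 2 * 1 :=
      mul_le_mul_of_nonneg_left h1 (sq_nonneg vm)
    have h4 : vp ^ 2 * 1 ≤ vp ^ 2 * rp ^ (m + 1) :=
      mul_le_mul_of_nonneg_left h2 (sq_nonneg vp)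
    linarith [h3, h4, hvm2]
  have hκ0' : κf 0 = κ₀ := by rw [hκf, hvp, hvm, hκ₀]; ring
  have hrec' : ∀ t, κf (t + 2) = c * κf (t + 1) - κf t := by
    intro t
    simp only [hκf]
    linear_combination (vp * rp ^ t) * hrp2 - (vm * rm ^ t) * hrm2
  have hrow' : c₁ * κf 0 = κf 1 := by
    simp only [hκf]
    rw [hvp, hvm, hc₁']
    linear_combination (-(rp - rm)) * hsum
  have hcorner' : c₁ * κf (m + 2 - 1) - κf (m + 2 - 2) = κ := by
    rw [show m + 2 - 1 = m + 1 from by omega, show m + 2 - 2 = m from by omega,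
      hκ, show m + 2 - 1 = m + 1 from by omega]
    simp only [hκf]
    rw [hvp, hvm, hc₁']
    linear_combination (-((rp - |φ|) * rp ^ m)) * hrp2 + ((rm - |φ|) * rm ^ m) * hrm2
  have hcross' : ∀ a d : ℕ, a + d + 2 = m + 2 →
      κf (a + 1) * κf (d + 1) - κf a * κf d = κ₀ * κ := by
    intro a d had
    rw [hκ₀, hκ, show m + 2 - 1 = a + d + 1 from by omega]
    simp only [hκf]
    linear_combination ((vp * rp ^ a - vm * rm ^ a) * (vp * rp ^ d - vm * rm ^ d)) * hprod
  have hmul := aux_mul (m + 2) hn c₁ c b κ₀ κ κf hb2 (ne_of_gt hκ₀pos) (ne_of_gt hκpos)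
    hκ0' hrec' hrow' hcorner' hcross'
  have hinv : (triQ (m + 2) c₁ c b)⁻¹ = auxM (m + 2) b κ₀ κ κf :=
    inv_eq_right_inv hmul
  intro t j htj
  rw [hinv]
  simp only [auxM, Matrix.of_apply]
  have hle : t.val ≤ j.val := htj
  rw [min_eq_left hle, max_eq_right hle, hu, hv]
end

section
/- With Q and its inverse as above, the sum of the t-th row of Q^{-1} equals s_t = (2b - c)^{-1} { b(1-φ)(v_t + v_{n-t+1}) - 1 }, where v_t = b^{t-1} κ_{n-t}/κ. -/
open Matrix

lemma triQ_val (n : ℕ) (c₁ c b : ℝ) (i j : Fin n) :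
    triQ n c₁ c b i j =
      if i.val = j.val then (if i.val = 0 ∨ i.val = n - 1 then c₁ else c)
      else if i.val + 1 = j.val ∨ j.val + 1 = i.val then -b else 0 := by
  simp [triQ, Fin.ext_iff]

lemma triQ_mk (n : ℕ) (c₁ c b : ℝ) (i : Fin n) (jv : ℕ) (hj : jv < n) :
    triQ n c₁ c b i ⟨jv, hj⟩ =
      if i.val = jv then (if i.val = 0 ∨ i.val = n - 1 then c₁ else c)
      else if i.val + 1 = jv ∨ jv + 1 = i.val then -b else 0 :=
  triQ_val n c₁ c b i ⟨jv, hj⟩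

lemma bdry_row (c₁ b D κ B k0 k1 km km1 p : ℝ) (hκ : κ ≠ 0) (hD : D ≠ 0) (hb2 : b*b = 1)
    (hI1 : c₁ * k0 = k1) (hI2 : c₁ * km1 - km = κ) (hB : B + b - c₁ = D) :
    c₁ * (D⁻¹ * (B * (km1/κ + p*b * k0/κ) - 1)) + (-b) * (D⁻¹ * (B*(b * km/κ + p * k1/κ) - 1)) = 1 := by
  have hdI : D⁻¹ * D = 1 := inv_mul_cancel₀ hD
  have hP : c₁*(B*(km1 + p*b*k0)) + (-b)*(B*(b*km + p*k1)) = κ*B := by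
    linear_combination B*hI2 + B*p*b*hI1 - B*km*hb2
  have hkI : κ⁻¹ * κ = 1 := inv_mul_cancel₀ hκ
  linear_combination (D⁻¹*κ⁻¹)*hP + (D⁻¹*B)*hkI + D⁻¹*hB + hdI

lemma mid_row (c b D κ B p q x0 x1 x2 y0 y1 y2 : ℝ) (hD : D ≠ 0)
    (hb2 : b*b = 1) (hx : x2 = c*x1 - x0) (hy : y2 = c*y1 - y0) (hB : 2*b - c = D) :
    (-b)*(D⁻¹*(B*(p*x2/κ + q*b*b*y0/κ) - 1)) + c * (D⁻¹*(B*(p*b*x1/κ + q*b*y1/κ) - 1))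
      + (-b)*(D⁻¹*(B*(p*b*b*x0/κ + q*y2/κ) - 1)) = 1 := by
  have hdI : D⁻¹ * D = 1 := inv_mul_cancel₀ hD
  have hP : (-b)*(B*(p*x2 + q*b*b*y0)) + c*(B*(p*b*x1 + q*b*y1)) + (-b)*(B*(p*b*b*x0 + q*y2)) = 0 := by
    linear_combination (-B*b*p)*hx + (-B*b*q)*hy + (-B*b*(p*x0+q*y0))*hb2
  linear_combination (D⁻¹*κ⁻¹)*hP + D⁻¹*hB + hdI

set_option maxHeartbeats 1000000

/-- the `t`-th row sum of `Q⁻¹` equals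
`s_t = (2b - c)⁻¹ (b(1-φ)(v_t + v_{n-t+1}) - 1)`, where in 0-based indexing
`v_t = b^t κ_{n-1-t}/κ` and the pairing `t ↔ n-t+1` is `t ↔ t.rev`. -/
theorem stmt_6 (n : ℕ) (hn : 2 ≤ n) (φ γ : ℝ) (hφ0 : φ ≠ 0) (hφ : |φ| < 1) (hγ : 0 < γ)
    (b c₁ c : ℝ) (hb : b = φ / |φ|) (hc₁ : c₁ = (1 + γ) / |φ|) (hc : c = c₁ + |φ|)
    (rp rm : ℝ) (hrp : rp = (c + Real.sqrt (c ^ 2 - 4)) / 2)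
    (hrm : rm = (c - Real.sqrt (c ^ 2 - 4)) / 2)
    (vp vm : ℝ) (hvp : vp = rp - |φ|) (hvm : vm = rm - |φ|)
    (κf : ℕ → ℝ) (hκf : ∀ t, κf t = vp * rp ^ t - vm * rm ^ t)
    (κ : ℝ) (hκ : κ = vp ^ 2 * rp ^ (n - 1) - vm ^ 2 * rm ^ (n - 1))
    (v : Fin n → ℝ) (hv : ∀ t : Fin n, v t = b ^ t.val * κf (n - 1 - t.val) / κ) :
    ∀ t : Fin n, (∑ j, (triQ n c₁ c b)⁻¹ t j)
      = (2 * b - c)⁻¹ * (b * (1 - φ) * (v t + v t.rev) - 1) := by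
  obtain ⟨m, rfl⟩ : ∃ m, n = m + 2 := ⟨n - 2, by omega⟩
  have ha0 : 0 < |φ| := abs_pos.mpr hφ0
  have hb2 : b * b = 1 := by
    rw [hb, div_mul_div_comm, abs_mul_abs_self]
    exact div_self (mul_self_ne_zero.mpr hφ0)
  have hbφ : b * φ = |φ| := by
    rw [hb, div_mul_eq_mul_div, ← abs_mul_abs_self, mul_div_assoc, div_self ha0.ne', mul_one]
  have hbB : b * (1 - φ) = b - |φ| := by rw [mul_sub, mul_one, hbφ]
  have habs : |b| = 1 := by rw [hb, abs_div, abs_abs, div_self ha0.ne']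
  have hc2 : 2 < c := by
    have h : (1+γ)/|φ| + |φ| - 2 = ((1-|φ|)^2 + γ)/|φ| := by
      field_simp; ring
    have h2 : 0 < ((1-|φ|)^2 + γ)/|φ| := div_pos (by positivity) ha0
    rw [hc, hc₁]; linarith
  have hcge : (0:ℝ) ≤ c^2 - 4 := by nlinarith
  have hΔsq : Real.sqrt (c^2-4) ^ 2 = c^2 - 4 := Real.sq_sqrt hcge
  have hΔ0 : 0 ≤ Real.sqrt (c^2-4) := Real.sqrt_nonneg _
  have hsum : rp + rm = c := by rw [hrp, hrm]; ring
  have hprod : rp * rm = 1 := by rw [hrp, hrm]; linear_combination (-1/4 : ℝ) * hΔsq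
  have hrp1 : 1 < rp := by rw [hrp]; linarith
  have hrm0 : 0 < rm := by nlinarith
  have hrm1 : rm < 1 := by nlinarith
  have hvp0 : 0 < vp := by rw [hvp]; linarith
  have hvmlt : vm < vp := by rw [hvp, hvm]; linarith
  have hvmgt : -vp < vm := by rw [hvp, hvm]; linarith
  have hvmsq : vm^2 < vp^2 := by nlinarith
  have hn1 : m + 2 - 1 = m + 1 := rfl
  rw [hn1] at hκ
  have hκ0 : 0 < κ := by
    rw [hκ]
    have t1 : vm^2 * rm^(m+1) < vp^2 * rm^(m+1) :=
      mul_lt_mul_of_pos_right hvmsq (pow_pos hrm0 _)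
    have t2 : vp^2 * rm^(m+1) ≤ vp^2 * 1 :=
      mul_le_mul_of_nonneg_left (pow_le_one₀ hrm0.le hrm1.le) (sq_nonneg vp)
    have t3 : vp^2 * 1 ≤ vp^2 * rp^(m+1) :=
      mul_le_mul_of_nonneg_left (one_le_pow₀ hrp1.le) (sq_nonneg vp)
    linarith
  have hκne : κ ≠ 0 := hκ0.ne'
  have hb1 : b ≤ 1 := habs ▸ le_abs_self b
  have hbm1 : -1 ≤ b := by have := neg_abs_le b; rwa [habs] at this
  have hD : 2*b - c ≠ 0 := ne_of_lt (show 2*b-c < 0 by linarith)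
  have h1 : rp^2 = c*rp - 1 := by linear_combination rp*hsum - hprod
  have h2 : rm^2 = c*rm - 1 := by linear_combination rm*hsum - hprod
  have hrec : ∀ s:ℕ, κf (s+2) = c * κf (s+1) - κf s := by
    intro s; rw [hκf, hκf, hκf]
    linear_combination (vp*rp^s) * h1 - (vm*rm^s)*h2
  have e1 : c₁ = rp + rm - |φ| := by rw [hsum]; linarith
  have hI1 : c₁ * κf 0 = κf 1 := by rw [hκf, hκf, e1, hvp, hvm]; ring
  have hcp : c₁ * rp - 1 = rp * vp := by rw [e1, hvp]; linear_combination hprod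
  have hcm : c₁ * rm - 1 = rm * vm := by rw [e1, hvm]; linear_combination hprod
  have hI2 : c₁ * κf (m+1) - κf m = κ := by
    rw [hκf (m+1), hκf m, hκ]
    linear_combination (vp*rp^m)*hcp - (vm*rm^m)*hcm
  have hc₁1 : 1 < c₁ := by rw [hc₁]; rw [lt_div_iff₀ ha0, one_mul]; linarith
  have hBsum : b*(1-φ) + b - c₁ = 2*b - c := by rw [hbB]; linarith
  set Q := triQ (m+2) c₁ c b with hQdef
  -- entries that are zero away from the tridiagonal band
  have hz : ∀ (i j : Fin (m+2)), i.val ≠ j.val → i.val + 1 ≠ j.val → j.val + 1 ≠ i.val →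
      Q i j = 0 := by
    intro i j hij h2' h3'
    rw [hQdef, triQ_val, if_neg hij, if_neg (by tauto)]
  -- the candidate solution
  obtain ⟨V, hV⟩ : ∃ V : ℕ → ℝ, ∀ s, V s = b^s * κf (m+1-s) / κ := ⟨_, fun _ => rfl⟩
  obtain ⟨S, hS⟩ : ∃ S : ℕ → ℝ,
      ∀ s, S s = (2*b-c)⁻¹ * (b*(1-φ) * (V s + V (m+1-s)) - 1) := ⟨_, fun _ => rfl⟩
  -- row sums localization
  have hloc : ∀ (f : Fin (m+2) → ℝ) (s : Finset (Fin (m+2))), (∀ j ∉ s, f j = 0) →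
      ∑ j, f j = ∑ j ∈ s, f j :=
    fun f s h => (Finset.sum_subset s.subset_univ (fun j _ hj => h j hj)).symm
  -- Q *ᵥ S = 1
  have hQS : Q *ᵥ (fun j => S j.val) = fun _ => 1 := by
    funext i
    show (∑ j, Q i j * S j.val) = 1
    rcases show i.val = 0 ∨ i.val = m+1 ∨ (0 < i.val ∧ i.val < m+1) by omega with hi | hi | hi
    · -- first row
      rw [hloc _ {⟨0, by omega⟩, ⟨1, by omega⟩} ?_, Finset.sum_pair (by simp [Fin.ext_iff])]
      · have E0 : Q i ⟨0, by omega⟩ = c₁ := by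
          rw [hQdef, triQ_mk, if_pos (by omega), if_pos (by omega)]
        have E1 : Q i ⟨1, by omega⟩ = -b := by
          rw [hQdef, triQ_mk, if_neg (by omega), if_pos (by omega)]
        rw [E0, E1]
        simp only [hS, hV, Nat.sub_zero, Nat.add_sub_cancel, Nat.sub_self, pow_zero,
          pow_one, one_mul, pow_succ]
        simp only [show m+1-m = 1 from by omega, show m+1-1 = m from by omega, pow_one]
        linear_combination bdry_row c₁ b (2*b-c) κ (b*(1-φ)) (κf 0) (κf 1) (κf m) (κf (m+1))
          (b^m) hκne hD hb2 hI1 hI2 hBsum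
      · intro j hj
        simp only [Finset.mem_insert, Finset.mem_singleton, not_or, Fin.ext_iff] at hj
        rw [hz i j (by omega) (by omega) (by omega), zero_mul]
    · -- last row
      rw [hloc _ {⟨m, by omega⟩, ⟨m+1, by omega⟩} ?_,
        Finset.sum_pair (by simp [Fin.ext_iff])]
      · have E0 : Q i ⟨m, by omega⟩ = -b := by
          rw [hQdef, triQ_mk, if_neg (by omega), if_pos (by omega)]
        have E1 : Q i ⟨m+1, by omega⟩ = c₁ := by
          rw [hQdef, triQ_mk, if_pos (by omega), if_pos (by omega)]
        rw [E0, E1]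
        simp only [hS, hV, Nat.sub_zero, Nat.add_sub_cancel, Nat.sub_self, pow_zero,
          pow_one, one_mul, pow_succ]
        simp only [show m+1-m = 1 from by omega, show m+1-1 = m from by omega, pow_one]
        linear_combination bdry_row c₁ b (2*b-c) κ (b*(1-φ)) (κf 0) (κf 1) (κf m) (κf (m+1))
          (b^m) hκne hD hb2 hI1 hI2 hBsum
      · intro j hj
        simp only [Finset.mem_insert, Finset.mem_singleton, not_or, Fin.ext_iff] at hj
        rw [hz i j (by omega) (by omega) (by omega), zero_mul]
    · -- middle rows
      obtain ⟨a, ha⟩ : ∃ a, i.val = a + 1 := ⟨i.val - 1, by omega⟩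
      obtain ⟨e, he⟩ : ∃ e, m = a + e + 1 := ⟨m - a - 1, by omega⟩
      rw [hloc _ {⟨a, by omega⟩, ⟨a+1, by omega⟩, ⟨a+2, by omega⟩} ?_]
      · rw [Finset.sum_insert (by simp [Fin.ext_iff]),
          Finset.sum_pair (by simp [Fin.ext_iff])]
        have E0 : Q i ⟨a, by omega⟩ = -b := by
          rw [hQdef, triQ_mk, if_neg (by omega), if_pos (by omega)]
        have E1 : Q i ⟨a+1, by omega⟩ = c := by
          rw [hQdef, triQ_mk, if_pos (by omega), if_neg (by omega)]
        have E2 : Q i ⟨a+2, by omega⟩ = -b := by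
          rw [hQdef, triQ_mk, if_neg (by omega), if_pos (by omega)]
        rw [E0, E1, E2]
        simp only [hS, hV]
        rw [show m+1-a = e+2 by omega, show m+1-(a+1) = e+1 by omega,
          show m+1-(a+2) = e by omega, show m+1-(e+2) = a by omega,
          show m+1-(e+1) = a+1 by omega, show m+1-e = a+2 by omega]
        simp only [pow_succ]
        linear_combination mid_row c b (2*b-c) κ (b*(1-φ)) (b^a) (b^e) (κf e) (κf (e+1))
          (κf (e+2)) (κf a) (κf (a+1)) (κf (a+2)) hD hb2 (hrec e) (hrec a) rfl
      · intro j hj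
        simp only [Finset.mem_insert, Finset.mem_singleton, not_or, Fin.ext_iff] at hj
        rw [hz i j (by omega) (by omega) (by omega), zero_mul]
  -- Q is invertible (strict diagonal dominance)
  have hdet : Q.det ≠ 0 := by
    apply det_ne_zero_of_sum_row_lt_diag
    intro k
    simp only [Real.norm_eq_abs]
    rcases show k.val = 0 ∨ k.val = m+1 ∨ (0 < k.val ∧ k.val < m+1) by omega with hk | hk | hk
    · have hd : Q k k = c₁ := by rw [hQdef, triQ_val, if_pos rfl, if_pos (by omega)]
      have hsub : ({⟨1, by omega⟩} : Finset (Fin (m+2))) ⊆ Finset.univ.erase k := by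
        simp only [Finset.singleton_subset_iff, Finset.mem_erase, Finset.mem_univ, and_true,
          ne_eq, Fin.ext_iff]
        omega
      have hzero : ∀ j ∈ Finset.univ.erase k, j ∉ ({⟨1, by omega⟩} : Finset (Fin (m+2))) →
          |Q k j| = 0 := by
        intro j hjm hj
        simp only [Finset.mem_erase, Finset.mem_univ, and_true, ne_eq, Fin.ext_iff] at hjm
        simp only [Finset.mem_singleton, ne_eq, Fin.ext_iff] at hj
        rw [hz k j (by omega) (by omega) (by omega), abs_zero]
      have hsum1 : ∑ j ∈ Finset.univ.erase k, |Q k j| = |b| := by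
        rw [← Finset.sum_subset hsub hzero, Finset.sum_singleton, hQdef, triQ_mk,
          if_neg (by omega), if_pos (by omega), abs_neg]
      rw [hsum1, hd, habs, abs_of_pos (by linarith)]
      linarith
    · have hd : Q k k = c₁ := by rw [hQdef, triQ_val, if_pos rfl, if_pos (by omega)]
      have hsub : ({⟨m, by omega⟩} : Finset (Fin (m+2))) ⊆ Finset.univ.erase k := by
        simp only [Finset.singleton_subset_iff, Finset.mem_erase, Finset.mem_univ, and_true,
          ne_eq, Fin.ext_iff]
        omega
      have hzero : ∀ j ∈ Finset.univ.erase k, j ∉ ({⟨m, by omega⟩} : Finset (Fin (m+2))) →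
          |Q k j| = 0 := by
        intro j hjm hj
        simp only [Finset.mem_erase, Finset.mem_univ, and_true, ne_eq, Fin.ext_iff] at hjm
        simp only [Finset.mem_singleton, ne_eq, Fin.ext_iff] at hj
        rw [hz k j (by omega) (by omega) (by omega), abs_zero]
      have hsum1 : ∑ j ∈ Finset.univ.erase k, |Q k j| = |b| := by
        rw [← Finset.sum_subset hsub hzero, Finset.sum_singleton, hQdef, triQ_mk,
          if_neg (by omega), if_pos (by omega), abs_neg]
      rw [hsum1, hd, habs, abs_of_pos (by linarith)]
      linarith
    · have hd : Q k k = c := by rw [hQdef, triQ_val, if_pos rfl, if_neg (by omega)]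
      have hsub : ({⟨k.val-1, by omega⟩, ⟨k.val+1, by omega⟩} : Finset (Fin (m+2))) ⊆
          Finset.univ.erase k := by
        intro x hx
        simp only [Finset.mem_insert, Finset.mem_singleton, ne_eq, Fin.ext_iff] at hx
        simp only [Finset.mem_erase, ne_eq, Fin.ext_iff, Finset.mem_univ, and_true]
        omega
      have hzero : ∀ j ∈ Finset.univ.erase k,
          j ∉ ({⟨k.val-1, by omega⟩, ⟨k.val+1, by omega⟩} : Finset (Fin (m+2))) →
          |Q k j| = 0 := by
        intro j hjm hj
        simp only [Finset.mem_erase, Finset.mem_univ, and_true, ne_eq, Fin.ext_iff] at hjm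
        simp only [Finset.mem_insert, Finset.mem_singleton, ne_eq, Fin.ext_iff, not_or] at hj
        rw [hz k j (by omega) (by omega) (by omega), abs_zero]
      have Ea : Q k ⟨k.val-1, by omega⟩ = -b := by
        rw [hQdef, triQ_mk, if_neg (by omega), if_pos (by omega)]
      have Eb : Q k ⟨k.val+1, by omega⟩ = -b := by
        rw [hQdef, triQ_mk, if_neg (by omega), if_pos (by omega)]
      have hsum1 : ∑ j ∈ Finset.univ.erase k, |Q k j| = |b| + |b| := by
        rw [← Finset.sum_subset hsub hzero, Finset.sum_pair (Fin.ne_of_val_ne (by omega : (k.val-1 : ℕ) ≠ k.val+1)),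
          Ea, Eb, abs_neg]
      rw [hsum1, hd, habs, abs_of_pos (by linarith)]
      linarith
  have hu : IsUnit Q.det := isUnit_iff_ne_zero.mpr hdet
  have hfin : Q⁻¹ *ᵥ (fun _ => (1:ℝ)) = fun j => S j.val := by
    rw [← hQS, Matrix.mulVec_mulVec, Matrix.nonsing_inv_mul Q hu, Matrix.one_mulVec]
  intro t
  have hrow : (∑ j, Q⁻¹ t j) = (Q⁻¹ *ᵥ (fun _ => (1:ℝ))) t := by
    simp [Matrix.mulVec, dotProduct]
  rw [hrow, hfin]
  show S t.val = _
  rw [hS, hv t, hv t.rev]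
  rw [show m+2-1 = m+1 from rfl]
  rw [show (t.rev.val : ℕ) = m+1 - t.val by rw [Fin.val_rev]; omega]
  rw [hV, hV]
end

section
/- If 0 < φ < 1, then every entry of Q^{-1} is positive, where Q is the symmetric tridiagonal matrix with diagonal (c₁, c, ..., c, c₁), c₁ = (1+γ)/φ, c = c₁ + φ, and off-diagonal entries -1, with γ > 0. -/
namespace Stmt7

noncomputable def u (c₁ c : ℝ) : ℕ → ℝ
  | 0 => 1
  | 1 => c₁
  | k+2 => c * u c₁ c (k+1) - u c₁ c k

variable {c₁ c : ℝ}

lemma u0 : u c₁ c 0 = 1 := rfl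
lemma u1 : u c₁ c 1 = c₁ := rfl
lemma urec (k : ℕ) : u c₁ c (k+2) = c * u c₁ c (k+1) - u c₁ c k := rfl

lemma ugrow (hc₁ : 1 < c₁) (hc : 2 ≤ c) : ∀ k, 1 ≤ u c₁ c k ∧ u c₁ c k < u c₁ c (k+1)
  | 0 => ⟨le_refl 1, by rw [u0, u1]; exact hc₁⟩
  | k+1 => by
    obtain ⟨h1, h2⟩ := ugrow hc₁ hc k
    refine ⟨by linarith, ?_⟩
    rw [urec]
    nlinarith

lemma upos (hc₁ : 1 < c₁) (hc : 2 ≤ c) (k : ℕ) : 0 < u c₁ c k := by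
  linarith [(ugrow hc₁ hc k).1]

lemma wron (k l : ℕ) : u c₁ c (k+1) * u c₁ c (l+1) - u c₁ c k * u c₁ c l
    = c₁ * u c₁ c (k+l+1) - u c₁ c (k+l) := by
  induction k generalizing l with
  | zero => simp [u0, u1]
  | succ k ih =>
    have h := ih (l+1)
    rw [show l+1+1 = l+2 from rfl, urec l,
        show k+(l+1)+1 = k+1+l+1 from by omega,
        show k+(l+1) = k+1+l from by omega] at h
    rw [show k+1+1 = k+2 from rfl, urec k]
    linear_combination h

lemma Dpos (hc₁ : 1 < c₁) (hc : 2 ≤ c) (p : ℕ) :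
    0 < c₁ * u c₁ c (p+1) - u c₁ c p := by
  have h1 := (ugrow hc₁ hc p).2
  have h2 := upos hc₁ hc (p+1)
  nlinarith

noncomputable def bf (p : ℕ) (c₁ c : ℝ) (i j : ℕ) : ℝ :=
  u c₁ c (min i j) * u c₁ c (p + 1 - max i j) / (c₁ * u c₁ c (p+1) - u c₁ c p)

lemma bf_pos (hc₁ : 1 < c₁) (hc : 2 ≤ c) (p i j : ℕ) : 0 < bf p c₁ c i j :=
  div_pos (mul_pos (upos hc₁ hc _) (upos hc₁ hc _)) (Dpos hc₁ hc p)

lemma key (p : ℕ) (hc₁ : 1 < c₁) (hc : 2 ≤ c) (i j : ℕ) (hi : i < p+2) (hj : j < p+2) :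
    ∑ k ∈ Finset.range (p+2),
      (if i = k then (if i = 0 ∨ i = p+1 then c₁ else c)
       else if i+1 = k ∨ k+1 = i then (-1:ℝ) else 0) * bf p c₁ c k j
    = if i = j then 1 else 0 := by
  have hD := Dpos hc₁ hc p
  by_cases h0 : i = 0
  · subst h0
    have hstep : ∀ k ∈ Finset.range (p+2),
        (if 0 = k then (if (0:ℕ) = 0 ∨ 0 = p+1 then c₁ else c)
         else if 0+1 = k ∨ k+1 = 0 then (-1:ℝ) else 0) * bf p c₁ c k j
        = (if k = 0 then c₁ * bf p c₁ c 0 j else 0)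
          + (if k = 1 then -bf p c₁ c 1 j else 0) := by
      intro k _
      by_cases e1 : k = 0
      · subst e1
        rw [if_pos rfl, if_pos (Or.inl rfl), if_pos rfl, if_neg (by omega)]
        ring
      · by_cases e2 : k = 1
        · subst e2
          rw [if_neg (by omega), if_pos (by omega), if_neg (by omega), if_pos rfl]
          ring
        · rw [if_neg (by omega), if_neg (by omega), if_neg e1, if_neg e2]
          ring
    rw [Finset.sum_congr rfl hstep, Finset.sum_add_distrib,
        Finset.sum_ite_eq' (Finset.range (p+2)) 0 (fun _ => c₁ * bf p c₁ c 0 j),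
        Finset.sum_ite_eq' (Finset.range (p+2)) 1 (fun _ => -bf p c₁ c 1 j),
        if_pos (by simp), if_pos (by simp)]
    by_cases hj0 : j = 0
    · subst hj0
      rw [if_pos rfl]
      unfold bf
      rw [show min 0 0 = 0 from rfl, show max 0 0 = 0 from rfl,
          show min 1 0 = 0 from rfl, show max 1 0 = 1 from rfl,
          show p+1-0 = p+1 from by omega, show p+1-1 = p from by omega, u0]
      field_simp
      ring
    · rw [if_neg (fun h => hj0 h.symm)]
      unfold bf
      rw [show min 0 j = 0 from by omega, show max 0 j = j from by omega,
          show min 1 j = 1 from by omega, show max 1 j = j from by omega, u0, u1]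
      ring
  · by_cases h1 : i = p+1
    · subst h1
      have hstep : ∀ k ∈ Finset.range (p+2),
          (if p+1 = k then (if p+1 = 0 ∨ p+1 = p+1 then c₁ else c)
           else if p+1+1 = k ∨ k+1 = p+1 then (-1:ℝ) else 0) * bf p c₁ c k j
          = (if k = p+1 then c₁ * bf p c₁ c (p+1) j else 0)
            + (if k = p then -bf p c₁ c p j else 0) := by
        intro k hk
        rw [Finset.mem_range] at hk
        by_cases e1 : k = p+1
        · subst e1
          rw [if_pos rfl, if_pos (Or.inr rfl), if_pos rfl, if_neg (by omega)]
          ring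
        · by_cases e2 : k = p
          · subst e2
            rw [if_neg (by omega), if_pos (by omega), if_neg e1, if_pos rfl]
            ring
          · rw [if_neg (by omega), if_neg (by omega), if_neg e1, if_neg e2]
            ring
      rw [Finset.sum_congr rfl hstep, Finset.sum_add_distrib,
          Finset.sum_ite_eq' (Finset.range (p+2)) (p+1) (fun _ => c₁ * bf p c₁ c (p+1) j),
          Finset.sum_ite_eq' (Finset.range (p+2)) p (fun _ => -bf p c₁ c p j),
          if_pos (by simp), if_pos (by simp [Finset.mem_range])]
      by_cases hjp : p+1 = j
      · subst hjp
        rw [if_pos rfl]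
        unfold bf
        rw [show min (p+1) (p+1) = p+1 from by omega, show max (p+1) (p+1) = p+1 from by omega,
            show min p (p+1) = p from by omega, show max p (p+1) = p+1 from by omega,
            show p+1-(p+1) = 0 from by omega, u0]
        field_simp
        ring
      · rw [if_neg hjp]
        have hjle : j ≤ p := by omega
        unfold bf
        rw [show min (p+1) j = j from by omega, show max (p+1) j = p+1 from by omega,
            show min p j = j from by omega, show max p j = p from by omega,
            show p+1-(p+1) = 0 from by omega, show p+1-p = 1 from by omega, u0, u1]
        ring
    · obtain ⟨q, rfl⟩ : ∃ q, i = q+1 := ⟨i-1, by omega⟩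
      have hqp : q+1 ≤ p := by omega
      obtain ⟨a, rfl⟩ : ∃ a, p = q+1+a := ⟨p-q-1, by omega⟩
      have hstep : ∀ k ∈ Finset.range (q+1+a+2),
          (if q+1 = k then (if q+1 = 0 ∨ q+1 = q+1+a+1 then c₁ else c)
           else if q+1+1 = k ∨ k+1 = q+1 then (-1:ℝ) else 0) * bf (q+1+a) c₁ c k j
          = (if k = q then -bf (q+1+a) c₁ c q j else 0)
            + (if k = q+1 then c * bf (q+1+a) c₁ c (q+1) j else 0)
            + (if k = q+2 then -bf (q+1+a) c₁ c (q+2) j else 0) := by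
        intro k hk
        rw [Finset.mem_range] at hk
        by_cases e1 : k = q
        · subst e1
          rw [if_neg (by omega), if_pos (by omega), if_pos rfl, if_neg (by omega),
              if_neg (by omega)]
          ring
        · by_cases e2 : k = q+1
          · subst e2
            rw [if_pos rfl, if_neg (by omega), if_neg e1, if_pos rfl, if_neg (by omega)]
            ring
          · by_cases e3 : k = q+2
            · subst e3
              rw [if_neg (by omega), if_pos (by omega), if_neg e1, if_neg e2, if_pos rfl]
              ring
            · rw [if_neg (by omega), if_neg (by omega), if_neg e1, if_neg e2, if_neg e3]
              ring
      rw [Finset.sum_congr rfl hstep, Finset.sum_add_distrib, Finset.sum_add_distrib,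
          Finset.sum_ite_eq' (Finset.range (q+1+a+2)) q (fun _ => -bf (q+1+a) c₁ c q j),
          Finset.sum_ite_eq' (Finset.range (q+1+a+2)) (q+1) (fun _ => c * bf (q+1+a) c₁ c (q+1) j),
          Finset.sum_ite_eq' (Finset.range (q+1+a+2)) (q+2) (fun _ => -bf (q+1+a) c₁ c (q+2) j),
          if_pos (by simp [Finset.mem_range]; omega),
          if_pos (by simp [Finset.mem_range]; omega),
          if_pos (by simp [Finset.mem_range]; omega)]
      by_cases hcmp : j = q+1
      · subst hcmp
        rw [if_pos rfl]
        have hw := wron (c₁ := c₁) (c := c) (q+1) a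
        rw [show q+1+1 = q+2 from rfl, urec q] at hw
        unfold bf
        rw [show min q (q+1) = q from by omega, show max q (q+1) = q+1 from by omega,
            show min (q+1) (q+1) = q+1 from by omega, show max (q+1) (q+1) = q+1 from by omega,
            show min (q+2) (q+1) = q+1 from by omega, show max (q+2) (q+1) = q+2 from by omega,
            show q+1+a+1-(q+1) = a+1 from by omega, show q+1+a+1-(q+2) = a from by omega]
        rw [show -(u c₁ c q * u c₁ c (a+1) / (c₁ * u c₁ c (q+1+a+1) - u c₁ c (q+1+a))) +
              c * (u c₁ c (q+1) * u c₁ c (a+1) / (c₁ * u c₁ c (q+1+a+1) - u c₁ c (q+1+a))) +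
              -(u c₁ c (q+1) * u c₁ c a / (c₁ * u c₁ c (q+1+a+1) - u c₁ c (q+1+a)))
            = (c * u c₁ c (q+1) * u c₁ c (a+1) - u c₁ c q * u c₁ c (a+1)
               - u c₁ c (q+1) * u c₁ c a) / (c₁ * u c₁ c (q+1+a+1) - u c₁ c (q+1+a)) from by ring,
            div_eq_one_iff_eq hD.ne']
        linear_combination hw
      · by_cases hlt : j ≤ q
        · rw [if_neg (by omega)]
          unfold bf
          rw [show min q j = j from by omega, show max q j = q from by omega,
              show min (q+1) j = j from by omega, show max (q+1) j = q+1 from by omega,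
              show min (q+2) j = j from by omega, show max (q+2) j = q+2 from by omega,
              show q+1+a+1-q = a+2 from by omega, show q+1+a+1-(q+1) = a+1 from by omega,
              show q+1+a+1-(q+2) = a from by omega, urec a]
          ring
        · rw [if_neg (by omega)]
          have hjge : q+2 ≤ j := by omega
          unfold bf
          rw [show min q j = q from by omega, show max q j = j from by omega,
              show min (q+1) j = q+1 from by omega, show max (q+1) j = j from by omega,
              show min (q+2) j = q+2 from by omega, show max (q+2) j = j from by omega,
              urec q]
          ring

end Stmt7

open Matrix

/-- if `0 < φ < 1` then every entry of `Q⁻¹` is positive, where `Q`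
has diagonal `(c₁, c, …, c, c₁)` with `c₁ = (1+γ)/φ`, `c = c₁ + φ`, and
off-diagonal entries `-1`. -/
theorem stmt_7 (n : ℕ) (hn : 2 ≤ n) (φ γ : ℝ) (hφ : 0 < φ) (hφ1 : φ < 1) (hγ : 0 < γ)
    (c₁ c : ℝ) (hc₁ : c₁ = (1 + γ) / φ) (hc : c = c₁ + φ) :
    ∀ t j : Fin n, 0 < (triQ n c₁ c 1)⁻¹ t j := by
  obtain ⟨p, rfl⟩ : ∃ p, n = p + 2 := ⟨n - 2, by omega⟩
  have hc₁' : (1:ℝ) < c₁ := by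
    rw [hc₁, lt_div_iff₀ hφ]; linarith
  have hc' : (2:ℝ) ≤ c := by
    have h3 : (1+γ)/φ + φ - 2 = ((1-φ)^2+γ)/φ := by field_simp; ring
    have h2 : (0:ℝ) < ((1-φ)^2 + γ)/φ := div_pos (by nlinarith) hφ
    rw [hc, hc₁]; linarith
  set B : Matrix (Fin (p+2)) (Fin (p+2)) ℝ :=
    Matrix.of (fun i j => Stmt7.bf p c₁ c i.val j.val) with hB
  have hQB : triQ (p+2) c₁ c 1 * B = 1 := by
    ext i j
    rw [Matrix.mul_apply, Matrix.one_apply]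
    have hconv : ∀ k : Fin (p+2), triQ (p+2) c₁ c 1 i k * B k j
        = (fun k : ℕ => (if i.val = k then (if i.val = 0 ∨ i.val = p+1 then c₁ else c)
           else if i.val+1 = k ∨ k+1 = i.val then (-1:ℝ) else 0) * Stmt7.bf p c₁ c k j.val) k.val := by
      intro k
      simp only [triQ, Matrix.of_apply, hB, Fin.ext_iff, show p+2-1 = p+1 from rfl]
    calc (∑ k : Fin (p+2), triQ (p+2) c₁ c 1 i k * B k j)
        = ∑ k : Fin (p+2), (fun k : ℕ => (if i.val = k then (if i.val = 0 ∨ i.val = p+1 then c₁ else c)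
           else if i.val+1 = k ∨ k+1 = i.val then (-1:ℝ) else 0) * Stmt7.bf p c₁ c k j.val) k.val :=
          Finset.sum_congr rfl (fun k _ => hconv k)
      _ = ∑ k ∈ Finset.range (p+2), (if i.val = k then (if i.val = 0 ∨ i.val = p+1 then c₁ else c)
           else if i.val+1 = k ∨ k+1 = i.val then (-1:ℝ) else 0) * Stmt7.bf p c₁ c k j.val :=
          by exact Fin.sum_univ_eq_sum_range (fun k => (if i.val = k then (if i.val = 0 ∨ i.val = p+1 then c₁ else c)
           else if i.val+1 = k ∨ k+1 = i.val then (-1:ℝ) else 0) * Stmt7.bf p c₁ c k j.val) (p+2)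
      _ = if i.val = j.val then 1 else 0 := Stmt7.key p hc₁' hc' i.val j.val i.isLt j.isLt
      _ = if i = j then 1 else 0 := by simp [Fin.ext_iff]
  have hinv : (triQ (p+2) c₁ c 1)⁻¹ = B := Matrix.inv_eq_right_inv hQB
  intro t j
  rw [hinv]
  exact Stmt7.bf_pos hc₁' hc' p t.val j.val
end

section
/- If 0 < φ < 1, the row sums s_t of Q^{-1} satisfy s_t > 1/(c₁ - φ) for all t, where c₁ = (1+γ)/φ. -/
open Matrix

lemma sum_ite_succ_eq (n : ℕ) (t : Fin n) (x : ℝ) :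
    ∑ j : Fin n, (if t.val + 1 = j.val then x else 0) = if t.val + 1 < n then x else 0 := by
  by_cases h : t.val + 1 < n
  · rw [if_pos h, Finset.sum_eq_single (⟨t.val + 1, h⟩ : Fin n)]
    · simp
    · intro j _ hj
      rw [if_neg]
      intro hc
      exact hj (Fin.ext hc.symm)
    · simp
  · rw [if_neg h, Finset.sum_eq_zero]
    intro j _
    rw [if_neg]
    intro hc
    exact h (hc ▸ j.isLt)

lemma sum_ite_pred_eq (n : ℕ) (t : Fin n) (x : ℝ) :
    ∑ j : Fin n, (if j.val + 1 = t.val then x else 0) = if 0 < t.val then x else 0 := by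
  by_cases h : 0 < t.val
  · rw [if_pos h, Finset.sum_eq_single (⟨t.val - 1, Nat.lt_of_le_of_lt (Nat.sub_le _ _) t.isLt⟩ : Fin n)]
    · rw [if_pos (show (⟨t.val - 1, Nat.lt_of_le_of_lt (Nat.sub_le _ _) t.isLt⟩ : Fin n).val + 1 = t.val by simp; omega)]
    · intro j _ hj
      rw [if_neg]
      intro hc
      apply hj
      apply Fin.ext
      simp only
      omega
    · simp
  · rw [if_neg h, Finset.sum_eq_zero]
    intro j _
    rw [if_neg]
    omega

lemma triQ_pt (n : ℕ) (c₁ c : ℝ) (t j : Fin n) :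
    triQ n c₁ c 1 t j =
      (if j = t then (if t.val = 0 ∨ t.val = n - 1 then c₁ else c) else 0)
      + (if t.val + 1 = j.val then (-1 : ℝ) else 0)
      + (if j.val + 1 = t.val then (-1 : ℝ) else 0) := by
  simp only [triQ, of_apply]
  by_cases h1 : t = j
  · subst h1
    rw [if_pos rfl, if_pos rfl, if_neg (show ¬(t.val + 1 = t.val) by omega)]
    ring
  · rw [if_neg h1, if_neg (Ne.symm h1)]
    by_cases h2 : t.val + 1 = j.val
    · rw [if_pos (Or.inl h2), if_pos h2,
        if_neg (show ¬(j.val + 1 = t.val) by omega)]; ring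
    · by_cases h3 : j.val + 1 = t.val
      · rw [if_pos (Or.inr h3), if_neg h2, if_pos h3]; ring
      · rw [if_neg (show ¬(t.val + 1 = j.val ∨ j.val + 1 = t.val) by tauto),
          if_neg h2, if_neg h3]; ring

lemma triQ_rowsum (n : ℕ) (c₁ c : ℝ) (t : Fin n) :
    ∑ j, triQ n c₁ c 1 t j =
      (if t.val = 0 ∨ t.val = n - 1 then c₁ else c)
      - (if t.val + 1 < n then 1 else 0) - (if 0 < t.val then 1 else 0) := by
  simp only [triQ_pt]
  rw [Finset.sum_add_distrib, Finset.sum_add_distrib, Finset.sum_ite_eq' Finset.univ t,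
    sum_ite_succ_eq, sum_ite_pred_eq]
  simp only [Finset.mem_univ, if_pos]
  split_ifs <;> ring

lemma triQ_offdiag_nonpos (n : ℕ) (c₁ c : ℝ) (t j : Fin n) (h : j ≠ t) :
    triQ n c₁ c 1 t j ≤ 0 := by
  simp only [triQ, of_apply, if_neg (Ne.symm h)]
  split_ifs <;> norm_num

lemma triQ_abs_offdiag (n : ℕ) (c₁ c : ℝ) (t : Fin n) :
    ∑ j ∈ Finset.univ.erase t, |triQ n c₁ c 1 t j| =
      (if t.val + 1 < n then 1 else 0) + (if 0 < t.val then 1 else 0) := by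
  have hg : ∀ j ∈ Finset.univ.erase t, |triQ n c₁ c 1 t j| =
      (if t.val + 1 = j.val then (1:ℝ) else 0) + (if j.val + 1 = t.val then 1 else 0) := by
    intro j hj
    have hjt : j ≠ t := (Finset.mem_erase.mp hj).1
    simp only [triQ, of_apply, if_neg (Ne.symm hjt)]
    by_cases h2 : t.val + 1 = j.val
    · rw [if_pos (Or.inl h2), if_pos h2,
        if_neg (show ¬(j.val + 1 = t.val) by omega)]; norm_num
    · by_cases h3 : j.val + 1 = t.val
      · rw [if_pos (Or.inr h3), if_neg h2, if_pos h3]; norm_num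
      · rw [if_neg (show ¬(t.val + 1 = j.val ∨ j.val + 1 = t.val) by tauto),
          if_neg h2, if_neg h3]; norm_num
  rw [Finset.sum_congr rfl hg, Finset.sum_erase _ (by norm_num),
    Finset.sum_add_distrib, sum_ite_succ_eq, sum_ite_pred_eq]

/-- if `0 < φ < 1`, the row sums `s_t` of `Q⁻¹` satisfy
`s_t > 1/(c₁ - φ)`, where `c₁ = (1+γ)/φ`, `c = c₁ + φ` and the off-diagonal
entries of `Q` are `-1`. -/
theorem stmt_8 (n : ℕ) (hn : 2 ≤ n) (φ γ : ℝ) (hφ : 0 < φ) (hφ1 : φ < 1) (hγ : 0 < γ)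
    (c₁ c : ℝ) (hc₁ : c₁ = (1 + γ) / φ) (hc : c = c₁ + φ) :
    ∀ t : Fin n, 1 / (c₁ - φ) < ∑ j, (triQ n c₁ c 1)⁻¹ t j := by
  have hφ' : φ ≠ 0 := ne_of_gt hφ
  have hkey : c₁ * φ = 1 + γ := by rw [hc₁]; field_simp
  have hc₁1 : 1 < c₁ := by nlinarith
  have hcφ : 0 < c₁ - φ := by nlinarith
  have hc2 : 2 < c := by nlinarith [sq_nonneg (1 - φ)]
  set Q := triQ n c₁ c 1 with hQ
  have hrs : ∀ t : Fin n, 0 < ∑ j, Q t j ∧ ∑ j, Q t j < c₁ - φ := by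
    intro t
    rw [hQ, triQ_rowsum]
    have ht := t.isLt
    by_cases h0 : t.val = 0 ∨ t.val = n - 1
    · rw [if_pos h0]
      rcases h0 with h0 | h0
      · rw [if_pos (by omega), if_neg (by omega)]
        constructor <;> linarith
      · rw [if_neg (by omega), if_pos (by omega)]
        constructor <;> linarith
    · rw [if_neg h0, if_pos (by omega), if_pos (by omega)]
      constructor <;> linarith
  have hdet : Q.det ≠ 0 := by
    apply det_ne_zero_of_sum_row_lt_diag
    intro k
    have hk := k.isLt
    have h1 : ∑ j ∈ Finset.univ.erase k, ‖Q k j‖ =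
        (if k.val + 1 < n then (1:ℝ) else 0) + (if 0 < k.val then 1 else 0) := by
      simp only [Real.norm_eq_abs]; exact triQ_abs_offdiag n c₁ c k
    have h2 : Q k k = if k.val = 0 ∨ k.val = n - 1 then c₁ else c := by
      simp [hQ, triQ]
    rw [h1, Real.norm_eq_abs, h2]
    by_cases h0 : k.val = 0 ∨ k.val = n - 1
    · rw [if_pos h0, abs_of_pos (by linarith)]
      rcases h0 with h0 | h0
      · rw [if_pos (by omega), if_neg (by omega)]; linarith
      · rw [if_neg (by omega), if_pos (by omega)]; linarith
    · rw [if_neg h0, abs_of_pos (by linarith), if_pos (by omega), if_pos (by omega)]; linarith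
  have hdet' : IsUnit Q.det := isUnit_iff_ne_zero.mpr hdet
  set s : Fin n → ℝ := Q⁻¹ *ᵥ (fun _ => 1) with hs
  have hs_eq : ∀ t, s t = ∑ j, Q⁻¹ t j := by
    intro t; simp [hs, mulVec, dotProduct]
  have hQs : Q *ᵥ s = fun _ => 1 := by
    rw [hs, mulVec_mulVec, Matrix.mul_nonsing_inv Q hdet', one_mulVec]
  set u : Fin n → ℝ := fun t => s t - 1 / (c₁ - φ) with hu
  have hQu : ∀ t, (Q *ᵥ u) t = 1 - (∑ j, Q t j) / (c₁ - φ) := by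
    intro t
    have expand : (Q *ᵥ u) t = ∑ j, (Q t j * s j - Q t j * (1 / (c₁ - φ))) := by
      simp only [mulVec, dotProduct, hu, mul_sub]
    rw [expand, Finset.sum_sub_distrib, ← Finset.sum_mul]
    have h1 : ∑ j, Q t j * s j = 1 := by
      have := congrFun hQs t
      simpa [mulVec, dotProduct] using this
    rw [h1]; ring
  intro t
  obtain ⟨t₀, -, hmin⟩ := Finset.exists_min_image Finset.univ u ⟨t, Finset.mem_univ t⟩
  have hposw : 0 < (Q *ᵥ u) t₀ := by
    rw [hQu]
    have h2 : (∑ j, Q t₀ j) / (c₁ - φ) < 1 := (div_lt_one hcφ).mpr (hrs t₀).2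
    linarith
  have hle : (Q *ᵥ u) t₀ ≤ (∑ j, Q t₀ j) * u t₀ := by
    rw [Finset.sum_mul]
    simp only [mulVec, dotProduct]
    apply Finset.sum_le_sum
    intro j _
    by_cases hj : j = t₀
    · subst hj; exact le_refl _
    · exact mul_le_mul_of_nonpos_left (hmin j (Finset.mem_univ j))
        (triQ_offdiag_nonpos n c₁ c t₀ j hj)
  have hu0 : 0 < u t₀ := by
    by_contra h
    push_neg at h
    have h2 : (∑ j, Q t₀ j) * u t₀ ≤ 0 :=
      mul_nonpos_of_nonneg_of_nonpos (le_of_lt (hrs t₀).1) h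
    linarith
  have hut : 0 < u t := lt_of_lt_of_le hu0 (hmin t (Finset.mem_univ t))
  have h3 : u t = s t - 1 / (c₁ - φ) := by rw [hu]
  have h4 := hs_eq t
  linarith [hut, h3 ▸ hut]
end

section
/- If -1 < φ < 0, the row sums s_t of Q^{-1} satisfy 2/(c+2) - 1/(c₁+φ) < s_t < 1/(c₁+φ), where c₁ = (1+γ)/|φ| and c = c₁ + |φ|. -/
open Matrix

lemma triQ_mulVec (n : ℕ) (c₁ c : ℝ) (v : Fin n → ℝ) (t : Fin n) :
    (triQ n c₁ c (-1)).mulVec v t =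
      (if (t : ℕ) = 0 ∨ (t : ℕ) = n - 1 then c₁ else c) * v t
      + (if h : (t : ℕ) + 1 < n then v ⟨(t : ℕ) + 1, h⟩ else 0)
      + (if h : 0 < (t : ℕ) then v ⟨(t : ℕ) - 1,
            Nat.lt_of_le_of_lt (Nat.sub_le _ _) t.isLt⟩ else 0) := by
  have key : ∀ j : Fin n, (triQ n c₁ c (-1)) t j * v j
      = (if j = t then ((if (t : ℕ) = 0 ∨ (t : ℕ) = n - 1 then c₁ else c) * v t) else 0)
        + ((if (j : ℕ) = (t : ℕ) + 1 then v j else 0)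
        + (if (j : ℕ) + 1 = (t : ℕ) then v j else 0)) := by
    intro j
    simp only [triQ, of_apply]
    by_cases h : j = t
    · subst h
      rw [if_pos rfl, if_pos rfl,
        if_neg (by omega : ¬((j : ℕ) = (j : ℕ) + 1)),
        if_neg (by omega : ¬((j : ℕ) + 1 = (j : ℕ)))]
      ring
    · rw [if_neg (fun e => h e.symm), if_neg h]
      have hne : (t : ℕ) ≠ (j : ℕ) := fun e => h (Fin.ext e.symm)
      by_cases h1 : (t : ℕ) + 1 = (j : ℕ)
      · rw [if_pos (Or.inl h1), if_pos h1.symm, if_neg (by omega : ¬((j : ℕ) + 1 = (t : ℕ)))]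
        ring
      · by_cases h2 : (j : ℕ) + 1 = (t : ℕ)
        · rw [if_pos (Or.inr h2), if_neg (by omega : ¬((j : ℕ) = (t : ℕ) + 1)), if_pos h2]
          ring
        · rw [if_neg (by tauto), if_neg (by omega : ¬((j : ℕ) = (t : ℕ) + 1)), if_neg h2]
          ring
  have hsum : (triQ n c₁ c (-1)).mulVec v t = ∑ j, ((if j = t then
        ((if (t : ℕ) = 0 ∨ (t : ℕ) = n - 1 then c₁ else c) * v t) else 0)
        + ((if (j : ℕ) = (t : ℕ) + 1 then v j else 0)
        + (if (j : ℕ) + 1 = (t : ℕ) then v j else 0))) := by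
    simp only [Matrix.mulVec, dotProduct]
    exact Finset.sum_congr rfl fun j _ => key j
  rw [hsum, Finset.sum_add_distrib, Finset.sum_add_distrib]
  have hA : (∑ j : Fin n, if j = t then
      ((if (t : ℕ) = 0 ∨ (t : ℕ) = n - 1 then c₁ else c) * v t) else 0)
      = (if (t : ℕ) = 0 ∨ (t : ℕ) = n - 1 then c₁ else c) * v t := by
    rw [Finset.sum_ite_eq' Finset.univ t]
    simp
  have hB : (∑ j : Fin n, if (j : ℕ) = (t : ℕ) + 1 then v j else 0)
      = (if h : (t : ℕ) + 1 < n then v ⟨(t : ℕ) + 1, h⟩ else 0) := by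
    by_cases h : (t : ℕ) + 1 < n
    · rw [dif_pos h]
      have e : ∀ j : Fin n, (if (j : ℕ) = (t : ℕ) + 1 then v j else 0)
          = (if j = (⟨(t : ℕ) + 1, h⟩ : Fin n) then v j else 0) := fun j =>
        if_congr (by simp [Fin.ext_iff]) rfl rfl
      rw [Finset.sum_congr rfl fun j _ => e j, Finset.sum_ite_eq' Finset.univ]
      simp
    · rw [dif_neg h]
      refine Finset.sum_eq_zero fun j _ => if_neg ?_
      have := j.isLt; omega
  have hC : (∑ j : Fin n, if (j : ℕ) + 1 = (t : ℕ) then v j else 0)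
      = (if h : 0 < (t : ℕ) then v ⟨(t : ℕ) - 1,
            Nat.lt_of_le_of_lt (Nat.sub_le _ _) t.isLt⟩ else 0) := by
    by_cases h : 0 < (t : ℕ)
    · rw [dif_pos h]
      have e : ∀ j : Fin n, (if (j : ℕ) + 1 = (t : ℕ) then v j else 0)
          = (if j = (⟨(t : ℕ) - 1, Nat.lt_of_le_of_lt (Nat.sub_le _ _) t.isLt⟩ : Fin n)
              then v j else 0) := fun j =>
        if_congr (by simp only [Fin.ext_iff]; omega) rfl rfl
      rw [Finset.sum_congr rfl fun j _ => e j, Finset.sum_ite_eq' Finset.univ]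
      simp
    · rw [dif_neg h]
      refine Finset.sum_eq_zero fun j _ => if_neg (by omega)
  rw [hA, hB, hC]
  ring

lemma triQ_bound (n : ℕ) (hn : 2 ≤ n) (c₁ c : ℝ) (h1 : 1 < c₁) (h2 : 2 < c)
    (v : Fin n → ℝ) (μ : ℝ) (hv : ∀ t, (triQ n c₁ c (-1)).mulVec v t = μ) :
    ∀ t, |v t - μ / (c + 2)| ≤ |μ| * |c + 1 - c₁| / ((c₁ - 1) * (c + 2)) := by
  have hc2 : (0:ℝ) < c + 2 := by linarith
  have hc11 : (0:ℝ) < c₁ - 1 := by linarith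
  haveI : Nonempty (Fin n) := ⟨⟨0, by omega⟩⟩
  set a := μ / (c + 2) with ha
  obtain ⟨T, hT⟩ := Finite.exists_max (fun t : Fin n => |v t - a|)
  set M := |v T - a| with hM
  have hM0 : 0 ≤ M := abs_nonneg _
  have hB0 : 0 ≤ |μ| * |c + 1 - c₁| / ((c₁ - 1) * (c + 2)) := by positivity
  suffices hMB : M ≤ |μ| * |c + 1 - c₁| / ((c₁ - 1) * (c + 2)) by
    intro t; exact le_trans (hT t) hMB
  have hrow := hv T
  rw [triQ_mulVec] at hrow
  have hTn := T.isLt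
  have hbnd : ∀ w : ℝ, |w - a| ≤ M → c₁ * v T + w = μ →
      M ≤ |μ| * |c + 1 - c₁| / ((c₁ - 1) * (c + 2)) := by
    intro w hwM hrow'
    have habs : |μ - (c₁ + 1) * a| = |μ| * |c + 1 - c₁| / (c + 2) := by
      have e : μ - (c₁ + 1) * a = μ * (c + 1 - c₁) / (c + 2) := by
        rw [ha]; field_simp; ring
      rw [e, abs_div, abs_mul, abs_of_pos hc2]
    have key : c₁ * M ≤ |μ| * |c + 1 - c₁| / (c + 2) + M := by
      have eabs : |c₁ * (v T - a)| = c₁ * M := by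
        rw [abs_mul, abs_of_pos (by linarith : (0:ℝ) < c₁), hM]
      have e : c₁ * (v T - a) = (μ - (c₁ + 1) * a) - (w - a) := by
        linear_combination hrow'
      calc c₁ * M = |c₁ * (v T - a)| := eabs.symm
        _ = |(μ - (c₁ + 1) * a) - (w - a)| := by rw [e]
        _ ≤ |μ - (c₁ + 1) * a| + |w - a| := abs_sub _ _
        _ ≤ |μ| * |c + 1 - c₁| / (c + 2) + M := by rw [habs]; linarith
    have k1 : (c₁ - 1) * M ≤ |μ| * |c + 1 - c₁| / (c + 2) := by linarith
    rw [le_div_iff₀ hc2] at k1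
    rw [le_div_iff₀ (by positivity : (0:ℝ) < (c₁ - 1) * (c + 2))]
    calc M * ((c₁ - 1) * (c + 2)) = (c₁ - 1) * M * (c + 2) := by ring
      _ ≤ _ := k1
  by_cases hb : (T : ℕ) = 0 ∨ (T : ℕ) = n - 1
  · rw [if_pos hb] at hrow
    rcases hb with h0 | h0
    · rw [dif_pos (by omega : (T : ℕ) + 1 < n), dif_neg (by omega)] at hrow
      exact hbnd _ (hT _) (by linarith [hrow])
    · have hTn1 : ¬((T : ℕ) + 1 < n) := by omega
      rw [dif_neg hTn1, dif_pos (by omega : 0 < (T : ℕ))] at hrow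
      exact hbnd _ (hT _) (by linarith [hrow])
  · push_neg at hb
    rw [if_neg (by tauto), dif_pos (by omega : (T : ℕ) + 1 < n),
      dif_pos (by omega : 0 < (T : ℕ))] at hrow
    -- interior: c * v T + w₁ + w₂ = μ, show M = 0
    set w₁ := v ⟨(T : ℕ) + 1, by omega⟩
    set w₂ := v ⟨(T : ℕ) - 1, Nat.lt_of_le_of_lt (Nat.sub_le _ _) T.isLt⟩
    have e : c * (v T - a) = -((w₁ - a) + (w₂ - a)) + (μ - (c + 2) * a) := by
      linear_combination hrow
    have ez : μ - (c + 2) * a = 0 := by rw [ha]; field_simp; ring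
    have key : c * M ≤ 2 * M := by
      have eabs : |c * (v T - a)| = c * M := by
        rw [abs_mul, abs_of_pos (by linarith : (0:ℝ) < c), hM]
      calc c * M = |c * (v T - a)| := eabs.symm
        _ = |(w₁ - a) + (w₂ - a)| := by rw [e, ez]; rw [add_zero, abs_neg]
        _ ≤ |w₁ - a| + |w₂ - a| := abs_add_le _ _
        _ ≤ 2 * M := by
            have hw1 : |w₁ - a| ≤ M := hT _
            have hw2 : |w₂ - a| ≤ M := hT _
            linarith
    have : M ≤ 0 := by nlinarith
    linarith

/-- if `-1 < φ < 0`, the row sums `s_t` of `Q⁻¹` satisfy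
`2/(c+2) - 1/(c₁+φ) < s_t < 1/(c₁+φ)`, where `c₁ = (1+γ)/|φ|`, `c = c₁ + |φ|`
and the off-diagonal entries of `Q` are `+1` (i.e. `-b` with `b = -1`). -/
theorem stmt_9 (n : ℕ) (hn : 2 ≤ n) (φ γ : ℝ) (hφ : -1 < φ) (hφ0 : φ < 0) (hγ : 0 < γ)
    (c₁ c : ℝ) (hc₁ : c₁ = (1 + γ) / |φ|) (hc : c = c₁ + |φ|) :
    ∀ t : Fin n,
      2 / (c + 2) - 1 / (c₁ + φ) < ∑ j, (triQ n c₁ c (-1))⁻¹ t j ∧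
      ∑ j, (triQ n c₁ c (-1))⁻¹ t j < 1 / (c₁ + φ) := by
  have hx1 : |φ| = -φ := abs_of_neg hφ0
  have hx0 : (0:ℝ) < -φ := by linarith
  have hkey : 2 - (-φ) < c₁ := by
    rw [hc₁, hx1, lt_div_iff₀ hx0]
    nlinarith [sq_nonneg (1 + φ)]
  have h1 : 1 < c₁ := by linarith
  have hcx : c = c₁ + (-φ) := by rw [hc, hx1]
  have h2 : 2 < c := by rw [hcx]; linarith
  have hd3 : 0 < c₁ + φ := by linarith
  have hc2 : (0:ℝ) < c + 2 := by linarith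
  set Q := triQ n c₁ c (-1) with hQ
  have hdet : IsUnit Q.det := by
    rw [isUnit_iff_ne_zero]
    intro h0
    obtain ⟨w, hw0, hww⟩ := (Matrix.exists_mulVec_eq_zero_iff).2 h0
    have hb := triQ_bound n hn c₁ c h1 h2 w 0 (fun t => congrFun hww t)
    apply hw0
    funext t
    have ht : |w t| ≤ 0 := by simpa using hb t
    exact abs_eq_zero.mp (le_antisymm ht (abs_nonneg _))
  set s : Fin n → ℝ := Q⁻¹ *ᵥ (fun _ => 1) with hs
  have hsum : ∀ t, ∑ j, Q⁻¹ t j = s t := by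
    intro t
    simp [hs, Matrix.mulVec, dotProduct]
  have hQs : ∀ t, Q.mulVec s t = 1 := by
    intro t
    have e : Q.mulVec s = fun _ => (1:ℝ) := by
      rw [hs, Matrix.mulVec_mulVec, Matrix.mul_nonsing_inv _ hdet, Matrix.one_mulVec]
    rw [e]
  have hbd := triQ_bound n hn c₁ c h1 h2 s 1 hQs
  have hB1 : c + 1 - c₁ = 1 - φ := by rw [hcx]; ring
  have hBeq : |(1:ℝ)| * |c + 1 - c₁| / ((c₁ - 1) * (c + 2))
      = (1 - φ) / ((c₁ - 1) * (c + 2)) := by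
    rw [abs_one, one_mul, hB1, abs_of_pos (by linarith : (0:ℝ) < 1 - φ)]
  have hBM : (1 - φ) / ((c₁ - 1) * (c + 2)) < 1 / (c₁ + φ) - 1 / (c + 2) := by
    have e1 : 1 / (c₁ + φ) - 1 / (c + 2) = (2 * (1 - φ)) / ((c₁ + φ) * (c + 2)) := by
      rw [div_sub_div _ _ (ne_of_gt hd3) (ne_of_gt hc2)]
      congr 1
      rw [hcx]; ring
    rw [e1, div_lt_div_iff₀ (mul_pos (by linarith : (0:ℝ) < c₁ - 1) hc2)
      (mul_pos hd3 hc2)]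
    nlinarith [mul_pos (mul_pos hc2 (show (0:ℝ) < 1 - φ by linarith))
      (show (0:ℝ) < c₁ - 2 - φ by linarith)]
  intro t
  have h := hbd t
  rw [hBeq] at h
  have hpair := abs_le.mp h
  rw [hsum t]
  obtain ⟨hlow, hhigh⟩ := hpair
  have h22 : 2 / (c + 2) = 1 / (c + 2) + 1 / (c + 2) := by ring
  constructor
  · linarith
  · linarith
end

section
/- For φ ≠ 0, the t-th entry of w^opt admits the closed form w_t^opt = { (1-φ)² + b γ (1-φ)(v_t + v_{n-t+1}) } / { (1-φ)² + γ }, where b = φ/|φ| and v_t is as defined from the tridiagonal inverse; for φ = 0, w_t^opt = 1/(1+γ). -/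
open Matrix

lemma ar1_mulVec {n : ℕ} (φ : ℝ) (x : Fin n → ℝ) (i : Fin n) :
    (ar1Lambda n φ *ᵥ x) i =
      (if i.val = 0 ∨ i.val = n - 1 then 1 else 1 + φ ^ 2) * x i
        - φ * (if h : i.val + 1 < n then x ⟨i.val + 1, h⟩ else 0)
        - φ * (if i.val = 0 then 0 else
            x ⟨i.val - 1, Nat.lt_of_le_of_lt (Nat.sub_le _ _) i.isLt⟩) := by
  have key : ∀ j : Fin n, ar1Lambda n φ i j * x j =
      (if j = i then (if i.val = 0 ∨ i.val = n - 1 then 1 else 1 + φ ^ 2) * x i else 0)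
      + (if j.val = i.val + 1 then -φ * x j else 0)
      + (if j.val + 1 = i.val then -φ * x j else 0) := by
    intro j
    simp only [ar1Lambda, of_apply]
    by_cases h1 : i = j
    · subst h1
      have e1 : ¬ ((i:ℕ) = i.val + 1) := by omega
      have e2 : ¬ ((i:ℕ) + 1 = i.val) := by omega
      rw [if_neg e1, if_neg e2]
      simp only [if_true, eq_self_iff_true, if_pos rfl]
      ring
    · have h1' : ¬ (j = i) := fun h => h1 h.symm
      have h1'' : ¬ (i = j) := h1
      rw [if_neg h1'', if_neg h1']
      by_cases h2 : i.val + 1 = j.val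
      · have e3 : j.val = i.val + 1 := h2.symm
        have e4 : ¬ ((j:ℕ) + 1 = i.val) := by omega
        rw [if_pos (Or.inl h2), if_pos e3, if_neg e4]; ring
      · by_cases h3 : j.val + 1 = i.val
        · have e5 : ¬ ((j:ℕ) = i.val + 1) := by omega
          rw [if_pos (Or.inr h3), if_neg e5, if_pos h3]; ring
        · have e6 : ¬ ((j:ℕ) = i.val + 1) := fun h => h2 h.symm
          rw [if_neg (by tauto), if_neg e6, if_neg h3]; ring
  rw [mulVec, dotProduct]
  simp only [key]
  rw [Finset.sum_add_distrib, Finset.sum_add_distrib]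
  have S1 : (∑ j : Fin n, if j = i then
      (if i.val = 0 ∨ i.val = n - 1 then (1:ℝ) else 1 + φ ^ 2) * x i else 0)
      = (if i.val = 0 ∨ i.val = n - 1 then (1:ℝ) else 1 + φ ^ 2) * x i := by
    simp
  have S2 : (∑ j : Fin n, if (j:ℕ) = i.val + 1 then -φ * x j else 0)
      = -φ * (if h : i.val + 1 < n then x ⟨i.val + 1, h⟩ else 0) := by
    by_cases h : i.val + 1 < n
    · have hiff : ∀ j : Fin n, ((j:ℕ) = i.val + 1) ↔ j = ⟨i.val + 1, h⟩ := by
        intro j; rw [Fin.ext_iff]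
      simp only [hiff]
      rw [dif_pos h, Finset.sum_ite_eq' Finset.univ (⟨i.val + 1, h⟩ : Fin n)
        (fun j => -φ * x j), if_pos (Finset.mem_univ _)]
    · rw [dif_neg h, mul_zero]
      apply Finset.sum_eq_zero
      intro j _
      rw [if_neg (by omega)]
  have S3 : (∑ j : Fin n, if (j:ℕ) + 1 = i.val then -φ * x j else 0)
      = -φ * (if i.val = 0 then 0 else
          x ⟨i.val - 1, Nat.lt_of_le_of_lt (Nat.sub_le _ _) i.isLt⟩) := by
    by_cases h : i.val = 0
    · rw [if_pos h, mul_zero]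
      apply Finset.sum_eq_zero
      intro j _
      rw [if_neg (by omega)]
    · have hlt : i.val - 1 < n := Nat.lt_of_le_of_lt (Nat.sub_le _ _) i.isLt
      have hiff : ∀ j : Fin n, ((j:ℕ) + 1 = i.val) ↔ j = ⟨i.val - 1, hlt⟩ := by
        intro j; rw [Fin.ext_iff]; simp only; omega
      simp only [hiff]
      rw [if_neg h, Finset.sum_ite_eq' Finset.univ (⟨i.val - 1, hlt⟩ : Fin n)
        (fun j => -φ * x j), if_pos (Finset.mem_univ _)]
  rw [S1, S2, S3]; ring

lemma omega_ker {n : ℕ} (hn : 2 ≤ n) (φ σε ση : ℝ) (hφ : |φ| < 1)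
    (hσε : 0 < σε) (hση : 0 < ση)
    (x : Fin n → ℝ)
    (hx : ((σε ^ 2)⁻¹ • (1 : Matrix (Fin n) (Fin n) ℝ) + (ση ^ 2)⁻¹ • ar1Lambda n φ) *ᵥ x = 0) :
    x = 0 := by
  have hne : (Finset.univ : Finset (Fin n)).Nonempty := by
    refine ⟨⟨0, by omega⟩, Finset.mem_univ _⟩
  obtain ⟨i, -, hi⟩ := Finset.exists_max_image Finset.univ (fun j => |x j|) hne
  set M := |x i| with hM
  have hMn : 0 ≤ M := abs_nonneg _
  have hrow : ((σε ^ 2)⁻¹ • (1 : Matrix (Fin n) (Fin n) ℝ)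
      + (ση ^ 2)⁻¹ • ar1Lambda n φ) *ᵥ x = 0 := hx
  have hval : (σε ^ 2)⁻¹ * x i + (ση ^ 2)⁻¹ * ((ar1Lambda n φ *ᵥ x) i) = 0 := by
    have := congrFun hx i
    simpa [add_mulVec, smul_mulVec, one_mulVec, Pi.add_apply, Pi.smul_apply,
      smul_eq_mul] using this
  rw [ar1_mulVec] at hval
  set up := (if h : i.val + 1 < n then x ⟨i.val + 1, h⟩ else 0) with hup
  set dn := (if i.val = 0 then 0 else
      x ⟨i.val - 1, Nat.lt_of_le_of_lt (Nat.sub_le _ _) i.isLt⟩) with hdn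
  have hupb : |up| ≤ M := by
    rw [hup]; split
    · exact hi _ (Finset.mem_univ _)
    · simpa using hMn
  have hdnb : |dn| ≤ M := by
    rw [hdn]; split
    · simpa using hMn
    · exact hi _ (Finset.mem_univ _)
  have hε : (0:ℝ) < (σε ^ 2)⁻¹ := by positivity
  have hη : (0:ℝ) < (ση ^ 2)⁻¹ := by positivity
  have hsq : φ ^ 2 = |φ| ^ 2 := (sq_abs φ).symm
  -- show M ≤ 0
  have hM0 : M ≤ 0 := by
    by_contra hMpos
    push_neg at hMpos
    by_cases hb : i.val = 0 ∨ i.val = n - 1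
    · -- boundary row: one neighbor is 0
      rw [if_pos hb] at hval
      have hone : up = 0 ∨ dn = 0 := by
        rcases hb with h0 | h1
        · right; rw [hdn, if_pos h0]
        · left; rw [hup, dif_neg (by omega)]
      have hpos : (0:ℝ) < (σε ^ 2)⁻¹ + (ση ^ 2)⁻¹ := by positivity
      have habs : |((σε ^ 2)⁻¹ + (ση ^ 2)⁻¹) * x i| = ((σε ^ 2)⁻¹ + (ση ^ 2)⁻¹) * M := by
        rw [abs_mul, abs_of_pos hpos]
      have heq : ((σε ^ 2)⁻¹ + (ση ^ 2)⁻¹) * x i = (ση ^ 2)⁻¹ * (φ * (up + dn)) := by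
        linear_combination hval
      have hsum : |up + dn| ≤ M := by
        rcases hone with h | h <;> rw [h] <;> simp [hupb, hdnb]
      have key : ((σε ^ 2)⁻¹ + (ση ^ 2)⁻¹) * M ≤ (ση ^ 2)⁻¹ * (|φ| * M) := by
        rw [← habs, heq, abs_mul, abs_of_pos hη, abs_mul]
        gcongr
      have hexp : ((σε ^ 2)⁻¹ + (ση ^ 2)⁻¹) * M = (σε ^ 2)⁻¹ * M + (ση ^ 2)⁻¹ * M := by
        ring
      have hlt : (ση ^ 2)⁻¹ * (|φ| * M) < (ση ^ 2)⁻¹ * M := by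
        have : |φ| * M < 1 * M := by
          apply mul_lt_mul_of_pos_right hφ hMpos
        calc (ση ^ 2)⁻¹ * (|φ| * M) < (ση ^ 2)⁻¹ * (1 * M) := by
              exact mul_lt_mul_of_pos_left this hη
          _ = (ση ^ 2)⁻¹ * M := by ring
      linarith [mul_pos hε hMpos, hexp, key, hlt]
    · -- interior row
      rw [if_neg hb] at hval
      have hpos : (0:ℝ) < (σε ^ 2)⁻¹ + (ση ^ 2)⁻¹ * (1 + φ ^ 2) := by positivity
      have habs : |((σε ^ 2)⁻¹ + (ση ^ 2)⁻¹ * (1 + φ ^ 2)) * x i|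
          = ((σε ^ 2)⁻¹ + (ση ^ 2)⁻¹ * (1 + φ ^ 2)) * M := by
        rw [abs_mul, abs_of_pos hpos]
      have heq : ((σε ^ 2)⁻¹ + (ση ^ 2)⁻¹ * (1 + φ ^ 2)) * x i
          = (ση ^ 2)⁻¹ * (φ * (up + dn)) := by linear_combination hval
      have hsum : |up + dn| ≤ 2 * M := by
        calc |up + dn| ≤ |up| + |dn| := abs_add_le _ _
          _ ≤ 2 * M := by linarith
      have key : ((σε ^ 2)⁻¹ + (ση ^ 2)⁻¹ * (1 + φ ^ 2)) * M
          ≤ (ση ^ 2)⁻¹ * (|φ| * (2 * M)) := by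
        rw [← habs, heq, abs_mul, abs_of_pos hη, abs_mul]
        gcongr
      rw [hsq] at key
      have key2 : (σε ^ 2)⁻¹ * M + (ση ^ 2)⁻¹ * M * (1 - |φ|) ^ 2 ≤ 0 := by
        nlinarith [key]
      nlinarith [mul_pos hε hMpos, mul_nonneg (mul_nonneg hη.le hMpos.le)
        (sq_nonneg (1 - |φ|))]
  funext j
  have hj : |x j| ≤ 0 := le_trans (hi j (Finset.mem_univ _)) hM0
  simpa using abs_eq_zero.mp (le_antisymm hj (abs_nonneg _))

set_option maxHeartbeats 1000000

/-- closed form of the entries of `w^opt = 1 - σ_ε⁻² Ω⁻¹ 1`: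
if `φ ≠ 0`, `w_t^opt = ((1-φ)² + bγ(1-φ)(v_t + v_{n-t+1})) / ((1-φ)² + γ)` with
`b = φ/|φ|` and `v_t = b^{t-1} κ_{n-t}/κ` (0-based: `v_t = b^t κ_{n-1-t}/κ`,
pairing `t ↔ t.rev`); if `φ = 0`, `w_t^opt = 1/(1+γ)`. -/
theorem stmt_10 (n : ℕ) (hn : 2 ≤ n) (φ γ : ℝ) (hφ : |φ| < 1) (hγ : 0 < γ)
    (σε ση : ℝ) (hσε : 0 < σε) (hση : 0 < ση) (hγdef : γ = ση ^ 2 / σε ^ 2)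
    (Ω : Matrix (Fin n) (Fin n) ℝ)
    (hΩ : Ω = (σε ^ 2)⁻¹ • (1 : Matrix (Fin n) (Fin n) ℝ) + (ση ^ 2)⁻¹ • ar1Lambda n φ)
    (wopt : Fin n → ℝ)
    (hwopt : wopt = (1 : Fin n → ℝ) - (σε ^ 2)⁻¹ • (Ω⁻¹ *ᵥ (1 : Fin n → ℝ)))
    (b c₁ c : ℝ) (hb : b = φ / |φ|) (hc₁ : c₁ = (1 + γ) / |φ|) (hc : c = c₁ + |φ|)
    (rp rm : ℝ) (hrp : rp = (c + Real.sqrt (c ^ 2 - 4)) / 2)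
    (hrm : rm = (c - Real.sqrt (c ^ 2 - 4)) / 2)
    (vp vm : ℝ) (hvp : vp = rp - |φ|) (hvm : vm = rm - |φ|)
    (κf : ℕ → ℝ) (hκf : ∀ t, κf t = vp * rp ^ t - vm * rm ^ t)
    (κ : ℝ) (hκ : κ = vp ^ 2 * rp ^ (n - 1) - vm ^ 2 * rm ^ (n - 1))
    (v : Fin n → ℝ) (hv : ∀ t : Fin n, v t = b ^ t.val * κf (n - 1 - t.val) / κ) :
    (φ ≠ 0 → ∀ t : Fin n,
        wopt t = ((1 - φ) ^ 2 + b * γ * (1 - φ) * (v t + v t.rev)) / ((1 - φ) ^ 2 + γ)) ∧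
    (φ = 0 → ∀ t : Fin n, wopt t = 1 / (1 + γ)) := by
  constructor
  · -- φ ≠ 0 case
    intro hφ0
    have habs : |φ| < 1 := hφ
    set A := |φ| with hAdef
    have hA0 : 0 < A := abs_pos.mpr hφ0
    have hA1 : A < 1 := hφ
    have hbA : φ = b * A := by rw [hb]; field_simp
    have hb2 : b ^ 2 = 1 := by
      rw [hb, div_pow, hAdef, sq_abs]
      exact div_self (pow_ne_zero 2 hφ0)
    have hcA : c * A = 1 + γ + A ^ 2 := by
      rw [hc, hc₁]; field_simp
    have hA2 : A ^ 2 < 1 := by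
      have := pow_lt_one₀ hA0.le hA1 (two_ne_zero)
      simpa using this
    have hc2 : 2 < c := by
      have key : A * (c - 2) = (1 - A) ^ 2 + γ := by linear_combination hcA
      have pos : 0 < A * (c - 2) := by rw [key]; positivity
      by_contra h
      push_neg at h
      have : A * (c - 2) ≤ 0 := mul_nonpos_of_nonneg_of_nonpos hA0.le (by linarith)
      linarith
    have hc24 : 0 < c ^ 2 - 4 := by
      have e : c ^ 2 - 4 = (c - 2) * (c + 2) := by ring
      rw [e]; exact mul_pos (by linarith) (by linarith)
    have hΔ2 : Real.sqrt (c ^ 2 - 4) ^ 2 = c ^ 2 - 4 := Real.sq_sqrt hc24.le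
    have hΔpos : 0 < Real.sqrt (c ^ 2 - 4) := Real.sqrt_pos.mpr hc24
    have hsum : rp + rm = c := by rw [hrp, hrm]; ring
    have hprod : rp * rm = 1 := by rw [hrp, hrm]; linear_combination (-(1:ℝ)/4) * hΔ2
    have hrp2 : rp ^ 2 = c * rp - 1 := by linear_combination rp * hsum - hprod
    have hrm2 : rm ^ 2 = c * rm - 1 := by linear_combination rm * hsum - hprod
    have hrec : ∀ k, κf (k + 2) = c * κf (k + 1) - κf k := by
      intro k
      simp only [hκf]
      linear_combination (vp * rp ^ k) * hrp2 - (vm * rm ^ k) * hrm2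
    obtain ⟨N, hN⟩ : ∃ N, n = N + 2 := ⟨n - 2, by omega⟩
    have hκ' : κ = vp ^ 2 * rp ^ (N + 1) - vm ^ 2 * rm ^ (N + 1) := by
      rw [hκ, show n - 1 = N + 1 from by omega]
    have hB : (c - A) * κf (N + 1) - κf N = κ := by
      rw [hκf, hκf, hκ', hvp, hvm]
      linear_combination (-(rp - A) * rp ^ N) * hrp2 + ((rm - A) * rm ^ N) * hrm2
    have hZ : (c - A) * κf 0 - κf 1 = 0 := by
      rw [hκf, hκf, hvp, hvm]
      linear_combination (rm - rp) * hsum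
    have hrp1 : 1 < rp := by rw [hrp]; linarith [hc2, hΔpos]
    have hrp0 : 0 < rp := lt_trans one_pos hrp1
    have hrmeq : rm = 1 / rp := by
      rw [eq_div_iff hrp0.ne']; linear_combination hprod
    have hrm0 : 0 < rm := by rw [hrmeq]; positivity
    have hrm1 : rm < 1 := by rw [hrmeq, div_lt_one hrp0]; exact hrp1
    have h2A : 2 * A < c := by
      have key2 : A * (c - 2 * A) = 1 + γ - A ^ 2 := by linear_combination hcA
      have pos2 : 0 < A * (c - 2 * A) := by rw [key2]; linarith
      by_contra h
      push_neg at h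
      have : A * (c - 2 * A) ≤ 0 := mul_nonpos_of_nonneg_of_nonpos hA0.le (by linarith)
      linarith
    have hvppos : 0 < vp := by rw [hvp, hrp]; linarith [hΔpos]
    have hpv : vp * vm = -γ := by
      rw [hvp, hvm]
      linear_combination hprod - A * hsum - hcA
    have hvmneg : vm < 0 := by
      by_contra h
      push_neg at h
      have := mul_nonneg hvppos.le h
      linarith
    have hκpos : 0 < κ := by
      have h1 : 1 ≤ rp ^ (N + 1) := one_le_pow₀ hrp1.le
      have h2 : rm ^ (N + 1) ≤ 1 := pow_le_one₀ hrm0.le hrm1.le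
      have hsv : vp + vm = c - 2 * A := by
        rw [hvp, hvm]; linear_combination hsum
      have hsv' : 0 < vp + vm := by rw [hsv]; linarith
      have h3 : vm ^ 2 < vp ^ 2 := by
        have hd : 0 < (vp - vm) * (vp + vm) := mul_pos (by linarith) hsv'
        have e : vp ^ 2 - vm ^ 2 = (vp - vm) * (vp + vm) := by ring
        linarith [e ▸ hd]
      have h4 : vp ^ 2 ≤ vp ^ 2 * rp ^ (N + 1) := by
        simpa using mul_le_mul_of_nonneg_left h1 (sq_nonneg vp)
      have h5 : vm ^ 2 * rm ^ (N + 1) ≤ vm ^ 2 := by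
        simpa using mul_le_mul_of_nonneg_left h2 (sq_nonneg vm)
      rw [hκ']; linarith
    have hκ0 : κ ≠ 0 := ne_of_gt hκpos
    have hD0 : (1 - φ) ^ 2 + γ ≠ 0 := by positivity
    have hγ1 : γ + 1 = A * (c - A) := by linear_combination -hcA
    have hφ2A : φ ^ 2 = A ^ 2 := by rw [hAdef, sq_abs]
    have hfact : γ + 1 + φ ^ 2 = A * c := by linear_combination hφ2A - hcA
    have hγσ : ση ^ 2 = γ * σε ^ 2 := by rw [hγdef]; field_simp
    have hg : ∀ j : Fin n, v j + v (Fin.rev j)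
        = (b ^ (j : ℕ) * κf (n - 1 - (j : ℕ))
            + b ^ (n - 1 - (j : ℕ)) * κf (j : ℕ)) / κ := by
      intro j
      have hjlt := j.isLt
      have hrev : ((Fin.rev j) : ℕ) = n - 1 - (j : ℕ) := by
        rw [Fin.val_rev]; omega
      rw [hv j, hv (Fin.rev j), hrev]
      have e2 : n - 1 - (n - 1 - (j : ℕ)) = (j : ℕ) := by omega
      rw [e2]; ring
    set D := (1 - φ) ^ 2 + γ with hDdef
    set u : Fin n → ℝ :=
      fun t => ση ^ 2 * (1 - b * (1 - φ) * (v t + v (Fin.rev t))) / D with hudef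
    have hσε2 : σε ^ 2 ≠ 0 := by positivity
    have hση2 : ση ^ 2 ≠ 0 := by positivity
    have e1 : ∀ Y : ℝ, (σε ^ 2)⁻¹ * (ση ^ 2 * Y / D) = γ * Y / D := by
      intro Y; rw [hγσ]; field_simp
    have e2 : ∀ Y Z : ℝ, (ση ^ 2)⁻¹ * (1 * (ση ^ 2 * Y / D) - φ * (ση ^ 2 * Z / D) - φ * 0)
        = (Y - φ * Z) / D := by
      intro Y Z; field_simp [hD0]; ring
    have e3 : ∀ Y Z : ℝ, (ση ^ 2)⁻¹ * (1 * (ση ^ 2 * Y / D) - φ * 0 - φ * (ση ^ 2 * Z / D))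
        = (Y - φ * Z) / D := by
      intro Y Z; field_simp [hD0]; ring
    have e4 : ∀ Y Z W : ℝ, (ση ^ 2)⁻¹ * ((1 + φ ^ 2) * (ση ^ 2 * Y / D)
          - φ * (ση ^ 2 * Z / D) - φ * (ση ^ 2 * W / D))
        = ((1 + φ ^ 2) * Y - φ * Z - φ * W) / D := by
      intro Y Z W; field_simp [hD0]
    have hG0κ : (γ + 1) * (κf (N + 1) + b ^ (N + 1) * κf 0)
        - φ * (b * κf N + b ^ N * κf 1) = A * κ := by
      rw [hγ1, hbA]
      linear_combination A * hB + (A * b ^ (N + 1)) * hZ + (-(A * κf N)) * hb2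
    have hrowx : ∀ (x : Fin n → ℝ) (i : Fin n),
        (Ω *ᵥ x) i = (σε ^ 2)⁻¹ * x i + (ση ^ 2)⁻¹ * ((ar1Lambda n φ *ᵥ x) i) := by
      intro x i
      rw [hΩ]
      simp [add_mulVec, smul_mulVec, one_mulVec]
    have hOmu : Ω *ᵥ u = 1 := by
      funext i
      have hilt := i.isLt
      rw [hrowx u i, ar1_mulVec, Pi.one_apply]
      by_cases hi0 : (i : ℕ) = 0
      · -- first row
        have h1n : (i : ℕ) + 1 < n := by omega
        rw [if_pos (Or.inl hi0), dif_pos h1n, if_pos hi0]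
        have hgi : v i + v (Fin.rev i) = (κf (N + 1) + b ^ (N + 1) * κf 0) / κ := by
          rw [hg i, hi0, show n - 1 - 0 = N + 1 from by omega, pow_zero, one_mul]
        have hval1 : ((⟨(i : ℕ) + 1, h1n⟩ : Fin n) : ℕ) = 1 := by
          show (i : ℕ) + 1 = 1; omega
        have hgu : v ⟨(i : ℕ) + 1, h1n⟩ + v (Fin.rev ⟨(i : ℕ) + 1, h1n⟩)
            = (b * κf N + b ^ N * κf 1) / κ := by
          rw [hg ⟨(i : ℕ) + 1, h1n⟩, hval1, show n - 1 - 1 = N from by omega, pow_one]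
        have hdiv : (γ + 1) * ((κf (N + 1) + b ^ (N + 1) * κf 0) / κ)
            - φ * ((b * κf N + b ^ N * κf 1) / κ) = A := by
          field_simp
          linear_combination hG0κ
        simp only [hudef]
        rw [hgi, hgu, e1, e2, ← add_div, div_eq_one_iff_eq hD0, hDdef]
        linear_combination (-(b * (1 - φ))) * hdiv + (1 - φ) * hbA
      · by_cases hin : (i : ℕ) = n - 1
        · -- last row
          rw [if_pos (Or.inr hin), dif_neg (show ¬((i : ℕ) + 1 < n) from by omega),
            if_neg hi0]
          have hgi : v i + v (Fin.rev i) = (b ^ (N + 1) * κf 0 + κf (N + 1)) / κ := by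
            rw [hg i, hin, show n - 1 - (n - 1) = 0 from by omega,
              show n - 1 = N + 1 from by omega, pow_zero, one_mul]
          have hvald : ((⟨(i : ℕ) - 1,
              Nat.lt_of_le_of_lt (Nat.sub_le _ _) i.isLt⟩ : Fin n) : ℕ) = N := by
            show (i : ℕ) - 1 = N; omega
          have hgd : v ⟨(i : ℕ) - 1, Nat.lt_of_le_of_lt (Nat.sub_le _ _) i.isLt⟩
              + v (Fin.rev ⟨(i : ℕ) - 1, Nat.lt_of_le_of_lt (Nat.sub_le _ _) i.isLt⟩)
              = (b ^ N * κf 1 + b * κf N) / κ := by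
            rw [hg ⟨(i : ℕ) - 1, Nat.lt_of_le_of_lt (Nat.sub_le _ _) i.isLt⟩, hvald,
              show n - 1 - N = 1 from by omega, pow_one]
          have hdiv : (γ + 1) * ((b ^ (N + 1) * κf 0 + κf (N + 1)) / κ)
              - φ * ((b ^ N * κf 1 + b * κf N) / κ) = A := by
            field_simp
            linear_combination hG0κ
          simp only [hudef]
          rw [hgi, hgd, e1, e3, ← add_div, div_eq_one_iff_eq hD0, hDdef]
          linear_combination (-(b * (1 - φ))) * hdiv + (1 - φ) * hbA
        · -- interior row
          have h1n : (i : ℕ) + 1 < n := by omega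
          rw [if_neg (not_or.mpr ⟨hi0, hin⟩), dif_pos h1n, if_neg hi0]
          obtain ⟨s, hs⟩ : ∃ s, (i : ℕ) = s + 1 := ⟨(i : ℕ) - 1, by omega⟩
          obtain ⟨q, hq⟩ : ∃ q, n - 1 - (i : ℕ) = q + 1 := ⟨n - 2 - (i : ℕ), by omega⟩
          have hgi : v i + v (Fin.rev i)
              = (b ^ (s + 1) * κf (q + 1) + b ^ (q + 1) * κf (s + 1)) / κ := by
            rw [hg i, hq, hs]
          have hvalu : ((⟨(i : ℕ) + 1, h1n⟩ : Fin n) : ℕ) = s + 2 := by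
            show (i : ℕ) + 1 = s + 2; omega
          have hgu : v ⟨(i : ℕ) + 1, h1n⟩ + v (Fin.rev ⟨(i : ℕ) + 1, h1n⟩)
              = (b ^ (s + 2) * κf q + b ^ q * κf (s + 2)) / κ := by
            rw [hg ⟨(i : ℕ) + 1, h1n⟩, hvalu, show n - 1 - (s + 2) = q from by omega]
          have hvald : ((⟨(i : ℕ) - 1,
              Nat.lt_of_le_of_lt (Nat.sub_le _ _) i.isLt⟩ : Fin n) : ℕ) = s := by
            show (i : ℕ) - 1 = s; omega
          have hgd : v ⟨(i : ℕ) - 1, Nat.lt_of_le_of_lt (Nat.sub_le _ _) i.isLt⟩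
              + v (Fin.rev ⟨(i : ℕ) - 1, Nat.lt_of_le_of_lt (Nat.sub_le _ _) i.isLt⟩)
              = (b ^ s * κf (q + 2) + b ^ (q + 2) * κf s) / κ := by
            rw [hg ⟨(i : ℕ) - 1, Nat.lt_of_le_of_lt (Nat.sub_le _ _) i.isLt⟩, hvald,
              show n - 1 - s = q + 2 from by omega]
          have hGtκ : (γ + 1 + φ ^ 2) * (b ^ (s + 1) * κf (q + 1) + b ^ (q + 1) * κf (s + 1))
              = φ * (b ^ (s + 2) * κf q + b ^ q * κf (s + 2))
                + φ * (b ^ s * κf (q + 2) + b ^ (q + 2) * κf s) := by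
            rw [hfact, hbA]
            linear_combination (-(A * b ^ (s + 1))) * hrec q + (-(A * b ^ (q + 1))) * hrec s
              + (-(A * b ^ (s + 1) * κf q + A * b ^ (q + 1) * κf s)) * hb2
          have hdivt : (γ + 1 + φ ^ 2)
                * ((b ^ (s + 1) * κf (q + 1) + b ^ (q + 1) * κf (s + 1)) / κ)
              = φ * ((b ^ (s + 2) * κf q + b ^ q * κf (s + 2)) / κ)
                + φ * ((b ^ s * κf (q + 2) + b ^ (q + 2) * κf s) / κ) := by
            field_simp
            linear_combination hGtκ
          simp only [hudef]
          rw [hgi, hgu, hgd, e1, e4, ← add_div, div_eq_one_iff_eq hD0, hDdef]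
          linear_combination (-(b * (1 - φ))) * hdivt
    have hinj : Function.Injective (Ω.mulVec) := by
      intro x y hxy
      have h0 : ((σε ^ 2)⁻¹ • (1 : Matrix (Fin n) (Fin n) ℝ)
          + (ση ^ 2)⁻¹ • ar1Lambda n φ) *ᵥ (x - y) = 0 := by
        rw [← hΩ, mulVec_sub, hxy, sub_self]
      exact sub_eq_zero.mp (omega_ker hn φ σε ση habs hσε hση (x - y) h0)
    have hunit : IsUnit Ω := (Matrix.mulVec_injective_iff_isUnit).mp hinj
    have hinv1 : Ω⁻¹ *ᵥ (1 : Fin n → ℝ) = u := by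
      rw [← hOmu, mulVec_mulVec, Matrix.nonsing_inv_mul Ω
        ((Matrix.isUnit_iff_isUnit_det Ω).mp hunit), one_mulVec]
    intro t
    rw [hwopt]
    simp only [Pi.sub_apply, Pi.smul_apply, Pi.one_apply, hinv1, smul_eq_mul, hudef]
    rw [hγσ, hDdef]
    field_simp [show (1 - φ) ^ 2 + γ ≠ 0 from hDdef ▸ hD0]
    ring
  · -- φ = 0 case
    intro hφ0
    subst hφ0
    have hΛ : ar1Lambda n 0 = (1 : Matrix (Fin n) (Fin n) ℝ) := by
      ext i j
      simp only [ar1Lambda, of_apply, Matrix.one_apply]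
      split_ifs <;> norm_num
    have ha : (0:ℝ) < (σε ^ 2)⁻¹ + (ση ^ 2)⁻¹ := by positivity
    have hΩ' : Ω = ((σε ^ 2)⁻¹ + (ση ^ 2)⁻¹) • (1 : Matrix (Fin n) (Fin n) ℝ) := by
      rw [hΩ, hΛ, ← add_smul]
    have hinv : Ω⁻¹ = ((σε ^ 2)⁻¹ + (ση ^ 2)⁻¹)⁻¹ • (1 : Matrix (Fin n) (Fin n) ℝ) := by
      apply Matrix.inv_eq_right_inv
      rw [hΩ', Matrix.smul_mul, Matrix.mul_smul, one_mul, smul_smul,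
        mul_inv_cancel₀ (ne_of_gt ha), one_smul]
    intro t
    rw [hwopt]
    simp only [Pi.sub_apply, Pi.smul_apply, hinv, smul_mulVec, one_mulVec,
      Pi.one_apply, smul_eq_mul]
    rw [hγdef]
    have h1 : σε ^ 2 ≠ 0 := by positivity
    have h2 : ση ^ 2 ≠ 0 := by positivity
    have h3 : (σε ^ 2)⁻¹ + (ση ^ 2)⁻¹ ≠ 0 := ne_of_gt ha
    field_simp
    ring
end

section
/- For 0 ≤ φ < 1, every entry of w^opt satisfies 1 - B₁ ≤ w_t^opt ≤ 1 - B₂, where B₁ = γ/((1-φ)² + γ) and B₂ = γ/(1 - φ² + γ); moreover 0 < B₂ ≤ B₁ < 1 in this range. -/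
open Matrix

lemma ar1_offdiag {n : ℕ} {φ : ℝ} (hφ0 : 0 ≤ φ) (t j : Fin n) (h : j ≠ t) :
    ar1Lambda n φ t j ≤ 0 := by
  simp only [ar1Lambda, Matrix.of_apply]
  rw [if_neg (fun h' => h h'.symm)]
  split_ifs <;> linarith

lemma ar1_decomp {n : ℕ} {φ : ℝ} (t j : Fin n) :
    ar1Lambda n φ t j =
      (if j = t then (if t.val = 0 ∨ t.val = n - 1 then (1:ℝ) else 1 + φ ^ 2) else 0)
      + (if j.val = t.val + 1 then -φ else 0) + (if t.val = j.val + 1 then -φ else 0) := by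
  simp only [ar1Lambda, Matrix.of_apply, Fin.ext_iff]
  split_ifs
  all_goals first | ring1 | (exfalso; omega)

lemma ar1_rowsum {n : ℕ} {φ : ℝ} (t : Fin n) :
    ∑ j, ar1Lambda n φ t j =
      (if t.val = 0 ∨ t.val = n - 1 then (1:ℝ) else 1 + φ ^ 2)
      + (if t.val + 1 < n then -φ else 0) + (if 0 < t.val then -φ else 0) := by
  rw [Finset.sum_congr rfl (fun j _ => ar1_decomp t j)]
  rw [Finset.sum_add_distrib, Finset.sum_add_distrib, Finset.sum_ite_eq' Finset.univ t]
  congr 1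
  · congr 1
    · simp
    · by_cases h : t.val + 1 < n
      · rw [if_pos h, Finset.sum_eq_single (⟨t.val + 1, h⟩ : Fin n)]
        · simp
        · intro j _ hj
          rw [if_neg]
          intro hc; exact hj (Fin.ext hc)
        · simp
      · rw [if_neg h]
        apply Finset.sum_eq_zero
        intro j _
        rw [if_neg]
        have := j.isLt; omega
  · by_cases h : 0 < t.val
    · rw [if_pos h, Finset.sum_eq_single (⟨t.val - 1, by omega⟩ : Fin n)]
      · rw [if_pos (show t.val = t.val - 1 + 1 from by omega)]
      · intro j _ hj
        rw [if_neg]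
        intro hc
        apply hj
        apply Fin.ext
        show (j : ℕ) = t.val - 1
        omega
      · simp
    · rw [if_neg h]
      apply Finset.sum_eq_zero
      intro j _
      rw [if_neg]
      omega

lemma ar1_rowsum_bounds {n : ℕ} {φ : ℝ} (hn : 2 ≤ n) (hφ0 : 0 ≤ φ) (hφ1 : φ ≤ 1) (t : Fin n) :
    (1 - φ) ^ 2 ≤ ∑ j, ar1Lambda n φ t j ∧ ∑ j, ar1Lambda n φ t j ≤ 1 - φ ^ 2 := by
  rw [ar1_rowsum]
  have hlt := t.isLt
  rcases eq_or_ne t.val 0 with h0 | h0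
  · rw [if_pos (Or.inl h0), if_pos (by omega), if_neg (by omega)]
    constructor <;> nlinarith
  · rcases eq_or_ne t.val (n - 1) with h1 | h1
    · rw [if_pos (Or.inr h1), if_neg (by omega), if_pos (by omega)]
      constructor <;> nlinarith
    · rw [if_neg (by tauto), if_pos (by omega), if_pos (by omega)]
      constructor <;> nlinarith

lemma ar1_argmax {n : ℕ} {φ : ℝ} (hφ0 : 0 ≤ φ) (u : Fin n → ℝ) (t : Fin n)
    (ht : ∀ s, u s ≤ u t) :
    (∑ j, ar1Lambda n φ t j) * u t ≤ (ar1Lambda n φ *ᵥ u) t := by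
  simp only [Matrix.mulVec, dotProduct, Finset.sum_mul]
  apply Finset.sum_le_sum
  intro j _
  rcases eq_or_ne j t with h | h
  · subst h; exact le_rfl
  · have h1 := ar1_offdiag hφ0 t j h
    have h2 := ht j
    nlinarith

lemma ar1_argmin {n : ℕ} {φ : ℝ} (hφ0 : 0 ≤ φ) (u : Fin n → ℝ) (t : Fin n)
    (ht : ∀ s, u t ≤ u s) :
    (ar1Lambda n φ *ᵥ u) t ≤ (∑ j, ar1Lambda n φ t j) * u t := by
  simp only [Matrix.mulVec, dotProduct, Finset.sum_mul]
  apply Finset.sum_le_sum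
  intro j _
  rcases eq_or_ne j t with h | h
  · subst h; exact le_rfl
  · have h1 := ar1_offdiag hφ0 t j h
    have h2 := ht j
    nlinarith

/-- Row equation extraction. -/
lemma ar1_row_eq {n : ℕ} {φ σε ση : ℝ} (u b : Fin n → ℝ)
    (hu : ((σε ^ 2)⁻¹ • (1 : Matrix (Fin n) (Fin n) ℝ) + (ση ^ 2)⁻¹ • ar1Lambda n φ) *ᵥ u = b)
    (t : Fin n) :
    (σε ^ 2)⁻¹ * u t + (ση ^ 2)⁻¹ * (ar1Lambda n φ *ᵥ u) t = b t := by
  have := congrFun hu t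
  simpa [Matrix.add_mulVec, Matrix.smul_mulVec, Matrix.one_mulVec] using this

lemma ar1_kernel_nonpos {n : ℕ} {φ σε ση : ℝ} (hn : 2 ≤ n) (hφ0 : 0 ≤ φ) (hφ1 : φ < 1)
    (hσε : 0 < σε) (hση : 0 < ση) (u : Fin n → ℝ)
    (hu : ((σε ^ 2)⁻¹ • (1 : Matrix (Fin n) (Fin n) ℝ) + (ση ^ 2)⁻¹ • ar1Lambda n φ) *ᵥ u = 0)
    (s : Fin n) : u s ≤ 0 := by
  have hne : (Finset.univ : Finset (Fin n)).Nonempty := ⟨⟨0, by omega⟩, Finset.mem_univ _⟩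
  obtain ⟨t, -, ht⟩ := Finset.exists_max_image Finset.univ u hne
  have ht' : ∀ s, u s ≤ u t := fun s => ht s (Finset.mem_univ s)
  by_contra hpos
  push_neg at hpos
  have hut : 0 < u t := lt_of_lt_of_le hpos (ht' s)
  have hrow := ar1_row_eq u 0 hu t
  simp only [Pi.zero_apply] at hrow
  have hmax := ar1_argmax (φ := φ) hφ0 u t ht'
  have hS := (ar1_rowsum_bounds (φ := φ) hn hφ0 hφ1.le t).1
  have ha : 0 < (σε ^ 2)⁻¹ := by positivity
  have hb : 0 < (ση ^ 2)⁻¹ := by positivity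
  have hSu : (1 - φ) ^ 2 * u t ≤ (∑ j, ar1Lambda n φ t j) * u t :=
    mul_le_mul_of_nonneg_right hS hut.le
  have h3 : 0 ≤ (ar1Lambda n φ *ᵥ u) t :=
    le_trans (le_trans (mul_nonneg (sq_nonneg _) hut.le) hSu) hmax
  nlinarith [mul_pos ha hut, mul_nonneg hb.le h3]

lemma ar1_kernel_zero {n : ℕ} {φ σε ση : ℝ} (hn : 2 ≤ n) (hφ0 : 0 ≤ φ) (hφ1 : φ < 1)
    (hσε : 0 < σε) (hση : 0 < ση) (u : Fin n → ℝ)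
    (hu : ((σε ^ 2)⁻¹ • (1 : Matrix (Fin n) (Fin n) ℝ) + (ση ^ 2)⁻¹ • ar1Lambda n φ) *ᵥ u = 0) :
    u = 0 := by
  funext s
  have h1 := ar1_kernel_nonpos hn hφ0 hφ1 hσε hση u hu s
  have h2 := ar1_kernel_nonpos hn hφ0 hφ1 hσε hση (-u) (by rw [Matrix.mulVec_neg, hu, neg_zero]) s
  simp only [Pi.neg_apply, neg_nonpos] at h2
  exact le_antisymm h1 (by simpa using h2)

lemma ar1_sol_ub {n : ℕ} {φ σε ση : ℝ} (hn : 2 ≤ n) (hφ0 : 0 ≤ φ) (hφ1 : φ < 1)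
    (hσε : 0 < σε) (hση : 0 < ση) (u : Fin n → ℝ)
    (hu : ((σε ^ 2)⁻¹ • (1 : Matrix (Fin n) (Fin n) ℝ) + (ση ^ 2)⁻¹ • ar1Lambda n φ) *ᵥ u = 1)
    (s : Fin n) : u s ≤ ((σε ^ 2)⁻¹ + (ση ^ 2)⁻¹ * (1 - φ) ^ 2)⁻¹ := by
  have ha : 0 < (σε ^ 2)⁻¹ := by positivity
  have hb : 0 < (ση ^ 2)⁻¹ := by positivity
  have hD : 0 < (σε ^ 2)⁻¹ + (ση ^ 2)⁻¹ * (1 - φ) ^ 2 := by positivity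
  have hne : (Finset.univ : Finset (Fin n)).Nonempty := ⟨⟨0, by omega⟩, Finset.mem_univ _⟩
  obtain ⟨t, -, ht⟩ := Finset.exists_max_image Finset.univ u hne
  have ht' : ∀ s, u s ≤ u t := fun s => ht s (Finset.mem_univ s)
  refine le_trans (ht' s) ?_
  rcases le_or_gt (u t) 0 with hut | hut
  · exact le_trans hut (by positivity)
  · have hrow := ar1_row_eq u 1 hu t
    simp only [Pi.one_apply] at hrow
    have hmax := ar1_argmax (φ := φ) hφ0 u t ht'
    have hS := (ar1_rowsum_bounds (φ := φ) hn hφ0 hφ1.le t).1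
    have hSu : (1 - φ) ^ 2 * u t ≤ (∑ j, ar1Lambda n φ t j) * u t :=
      mul_le_mul_of_nonneg_right hS hut.le
    have h1 : (ση ^ 2)⁻¹ * ((1 - φ) ^ 2 * u t) ≤ (ση ^ 2)⁻¹ * (ar1Lambda n φ *ᵥ u) t :=
      mul_le_mul_of_nonneg_left (le_trans hSu hmax) hb.le
    have h2 : ((σε ^ 2)⁻¹ + (ση ^ 2)⁻¹ * (1 - φ) ^ 2) * u t ≤ 1 := by nlinarith
    rw [inv_eq_one_div, le_div_iff₀ hD]
    nlinarith

lemma ar1_sol_lb {n : ℕ} {φ σε ση : ℝ} (hn : 2 ≤ n) (hφ0 : 0 ≤ φ) (hφ1 : φ < 1)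
    (hσε : 0 < σε) (hση : 0 < ση) (u : Fin n → ℝ)
    (hu : ((σε ^ 2)⁻¹ • (1 : Matrix (Fin n) (Fin n) ℝ) + (ση ^ 2)⁻¹ • ar1Lambda n φ) *ᵥ u = 1)
    (s : Fin n) : ((σε ^ 2)⁻¹ + (ση ^ 2)⁻¹ * (1 - φ ^ 2))⁻¹ ≤ u s := by
  have ha : 0 < (σε ^ 2)⁻¹ := by positivity
  have hb : 0 < (ση ^ 2)⁻¹ := by positivity
  have hφ2 : 0 < 1 - φ ^ 2 := by nlinarith
  have hE : 0 < (σε ^ 2)⁻¹ + (ση ^ 2)⁻¹ * (1 - φ ^ 2) := by positivity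
  have hne : (Finset.univ : Finset (Fin n)).Nonempty := ⟨⟨0, by omega⟩, Finset.mem_univ _⟩
  obtain ⟨t, -, ht⟩ := Finset.exists_min_image Finset.univ u hne
  have ht' : ∀ s, u t ≤ u s := fun s => ht s (Finset.mem_univ s)
  refine le_trans ?_ (ht' s)
  have hrow := ar1_row_eq u 1 hu t
  simp only [Pi.one_apply] at hrow
  have hmin := ar1_argmin (φ := φ) hφ0 u t ht'
  obtain ⟨hS1, hS2⟩ := ar1_rowsum_bounds (φ := φ) hn hφ0 hφ1.le t
  have hSnn : 0 ≤ ∑ j, ar1Lambda n φ t j := le_trans (sq_nonneg _) hS1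
  -- first : u t > 0
  have hut : 0 < u t := by
    by_contra hle
    push_neg at hle
    have hSu : (∑ j, ar1Lambda n φ t j) * u t ≤ 0 := mul_nonpos_of_nonneg_of_nonpos hSnn hle
    have h1 : (ση ^ 2)⁻¹ * (ar1Lambda n φ *ᵥ u) t ≤ 0 :=
      mul_nonpos_of_nonneg_of_nonpos hb.le (le_trans hmin hSu)
    nlinarith
  have hSu : (∑ j, ar1Lambda n φ t j) * u t ≤ (1 - φ ^ 2) * u t :=
    mul_le_mul_of_nonneg_right hS2 hut.le
  have h1 : (ση ^ 2)⁻¹ * (ar1Lambda n φ *ᵥ u) t ≤ (ση ^ 2)⁻¹ * ((1 - φ ^ 2) * u t) :=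
    mul_le_mul_of_nonneg_left (le_trans hmin hSu) hb.le
  have h2 : 1 ≤ ((σε ^ 2)⁻¹ + (ση ^ 2)⁻¹ * (1 - φ ^ 2)) * u t := by nlinarith
  rw [inv_eq_one_div, div_le_iff₀ hE]
  nlinarith


/-- for `0 ≤ φ < 1`, every entry of `w^opt = 1 - σ_ε⁻² Ω⁻¹ 1`
satisfies `1 - B₁ ≤ w_t^opt ≤ 1 - B₂`, with `B₁ = γ/((1-φ)²+γ)`,
`B₂ = γ/(1-φ²+γ)`; moreover `0 < B₂ ≤ B₁ < 1`. -/
theorem stmt_11 (n : ℕ) (hn : 2 ≤ n) (φ γ : ℝ) (hφ0 : 0 ≤ φ) (hφ1 : φ < 1)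
    (σε ση : ℝ) (hσε : 0 < σε) (hση : 0 < ση) (hγ : γ = ση ^ 2 / σε ^ 2)
    (Ω : Matrix (Fin n) (Fin n) ℝ)
    (hΩ : Ω = (σε ^ 2)⁻¹ • (1 : Matrix (Fin n) (Fin n) ℝ) + (ση ^ 2)⁻¹ • ar1Lambda n φ)
    (wopt : Fin n → ℝ)
    (hwopt : wopt = (1 : Fin n → ℝ) - (σε ^ 2)⁻¹ • (Ω⁻¹ *ᵥ (1 : Fin n → ℝ)))
    (B₁ B₂ : ℝ) (hB₁ : B₁ = γ / ((1 - φ) ^ 2 + γ)) (hB₂ : B₂ = γ / (1 - φ ^ 2 + γ)) :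
    (∀ t : Fin n, 1 - B₁ ≤ wopt t ∧ wopt t ≤ 1 - B₂) ∧
    (0 < B₂ ∧ B₂ ≤ B₁ ∧ B₁ < 1) := by
  have hσε2 : (0:ℝ) < σε ^ 2 := by positivity
  have hση2 : (0:ℝ) < ση ^ 2 := by positivity
  have hγ0 : 0 < γ := by rw [hγ]; positivity
  have hφ2 : 0 < 1 - φ ^ 2 := by nlinarith
  have hd1 : 0 < (1 - φ) ^ 2 + γ := by positivity
  have hd2 : 0 < 1 - φ ^ 2 + γ := by positivity
  -- invertibility
  have hdet : Ω.det ≠ 0 := by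
    intro h
    obtain ⟨v, hv0, hv⟩ := (Matrix.exists_mulVec_eq_zero_iff).mpr h
    exact hv0 (ar1_kernel_zero hn hφ0 hφ1 hσε hση v (by rwa [← hΩ]))
  have hu : Ω *ᵥ (Ω⁻¹ *ᵥ (1 : Fin n → ℝ)) = 1 := by
    rw [Matrix.mulVec_mulVec, Matrix.mul_nonsing_inv _ (isUnit_iff_ne_zero.mpr hdet),
      Matrix.one_mulVec]
  set u : Fin n → ℝ := Ω⁻¹ *ᵥ (1 : Fin n → ℝ) with hu_def
  have hu' : ((σε ^ 2)⁻¹ • (1 : Matrix (Fin n) (Fin n) ℝ) + (ση ^ 2)⁻¹ • ar1Lambda n φ) *ᵥ u = 1 := by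
    rwa [← hΩ]
  have hub := ar1_sol_ub hn hφ0 hφ1 hσε hση u hu'
  have hlb := ar1_sol_lb hn hφ0 hφ1 hσε hση u hu'
  have ha : (0:ℝ) < (σε ^ 2)⁻¹ := by positivity
  have hB₁eq : (σε ^ 2)⁻¹ * ((σε ^ 2)⁻¹ + (ση ^ 2)⁻¹ * (1 - φ) ^ 2)⁻¹ = B₁ := by
    rw [hB₁, hγ]
    field_simp
    ring
  have hB₂eq : (σε ^ 2)⁻¹ * ((σε ^ 2)⁻¹ + (ση ^ 2)⁻¹ * (1 - φ ^ 2))⁻¹ = B₂ := by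
    rw [hB₂, hγ]
    field_simp
    ring
  constructor
  · intro t
    have hw : wopt t = 1 - (σε ^ 2)⁻¹ * u t := by
      rw [hwopt]; simp [hu_def]
    constructor
    · rw [hw]
      have := mul_le_mul_of_nonneg_left (hub t) ha.le
      rw [hB₁eq] at this
      linarith
    · rw [hw]
      have := mul_le_mul_of_nonneg_left (hlb t) ha.le
      rw [hB₂eq] at this
      linarith
  · refine ⟨by rw [hB₂]; positivity, ?_, ?_⟩
    · rw [hB₁, hB₂]
      apply div_le_div_of_nonneg_left hγ0.le hd1
      nlinarith
    · rw [hB₁, div_lt_one hd1]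
      nlinarith
end
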